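/- arXiv:2511.05011 — 4 statements merged into one kernel-verified Lean document; each statement's English description precedes it below -/
import Mathlib

section
/- Let 0 < ρ < 1 and let v be continuous on [0,T] and differentiable on (0,T), with its Caputo derivative D^ρ v continuous on [0,T]. (a) If t₀ ∈ (0,T] is a point where v attains its maximum over [0,T], then D^ρ v(t₀) ≥ 0. (b) If t₀ ∈ (0,T] is a point where v attains its minimum over [0,T], then D^ρ v(t₀) ≤ 0. -/
open Real Set MeasureTheory intervalIntegral Filter

/-- The Caputo fractional derivative of order `ρ`:
`D^ρ h(t) = (1/Γ(1-ρ)) ∫₀^t h'(η) (t-η)^{-ρ} dη`. -/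
noncomputable def caputo (ρ : ℝ) (h : ℝ → ℝ) (t : ℝ) : ℝ :=
  (1 / Real.Gamma (1 - ρ)) * ∫ η in (0:ℝ)..t, deriv h η * (t - η) ^ (-ρ)

lemma caputo_max_aux (ρ T : ℝ) (hρ₀ : 0 < ρ) (hρ₁ : ρ < 1) (hT : 0 < T)
    (v : ℝ → ℝ) (hv : ContinuousOn v (Set.Icc 0 T))
    (hv' : DifferentiableOn ℝ v (Set.Ioo 0 T))
    (t₀ : ℝ) (ht₀0 : 0 < t₀) (ht₀T : t₀ ≤ T)
    (hmax : ∀ t ∈ Set.Icc 0 T, v t ≤ v t₀) :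
    0 ≤ caputo ρ v t₀ := by
  have hΓ : 0 < Real.Gamma (1 - ρ) := Real.Gamma_pos_of_pos (by linarith)
  set f : ℝ → ℝ := fun η => deriv v η * (t₀ - η) ^ (-ρ) with hfdef
  rw [caputo]
  by_cases hint : IntervalIntegrable f volume 0 t₀
  swap
  · rw [intervalIntegral.integral_undef hint]; simp
  have habs : IntervalIntegrable (fun η => |f η|) volume 0 t₀ := hint.abs
  have hvd : ∀ x ∈ Set.Ioo (0:ℝ) T, HasDerivAt v (deriv v x) x := fun x hx =>
    (hv'.differentiableAt (Ioo_mem_nhds hx.1 hx.2)).hasDerivAt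
  set F : ℝ → ℝ := fun s => ∫ η in s..t₀, |f η| with hFdef
  -- splitting formula for F
  have hsub : ∀ s : ℝ, 0 ≤ s → s ≤ t₀ →
      IntervalIntegrable (fun η => |f η|) volume 0 s ∧
      IntervalIntegrable (fun η => |f η|) volume s t₀ := by
    intro s h0 h1
    constructor
    · exact habs.mono_set (by rw [uIcc_of_le h0, uIcc_of_le ht₀0.le]; exact Icc_subset_Icc le_rfl h1)
    · exact habs.mono_set (by rw [uIcc_of_le h1, uIcc_of_le ht₀0.le]; exact Icc_subset_Icc h0 le_rfl)
  have hsplit : ∀ s : ℝ, 0 ≤ s → s ≤ t₀ →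
      F s = (∫ η in (0:ℝ)..t₀, |f η|) - ∫ η in (0:ℝ)..s, |f η| := by
    intro s h0 h1
    obtain ⟨ha, hb⟩ := hsub s h0 h1
    have := integral_add_adjacent_intervals ha hb
    simp only [hFdef]; linarith
  -- F tends to 0 as s → t₀ within Ioo 0 t₀
  have hF0 : Tendsto F (nhdsWithin t₀ (Set.Ioo 0 t₀)) (nhds 0) := by
    have hcp : ContinuousOn (fun s => ∫ η in (0:ℝ)..s, |f η|) (Set.uIcc 0 t₀) :=
      intervalIntegral.continuousOn_primitive_interval' habs left_mem_uIcc
    have h1 : Tendsto (fun s => ∫ η in (0:ℝ)..s, |f η|) (nhdsWithin t₀ (Set.Ioo 0 t₀))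
        (nhds (∫ η in (0:ℝ)..t₀, |f η|)) := by
      have := (hcp t₀ (right_mem_uIcc)).tendsto
      exact this.mono_left (nhdsWithin_mono _ (by rw [uIcc_of_le ht₀0.le]; exact Ioo_subset_Icc_self))
    have h2 : Tendsto (fun s => (∫ η in (0:ℝ)..t₀, |f η|) - ∫ η in (0:ℝ)..s, |f η|)
        (nhdsWithin t₀ (Set.Ioo 0 t₀)) (nhds 0) := by
      have := (tendsto_const_nhds (x := ∫ η in (0:ℝ)..t₀, |f η|)
        (f := nhdsWithin t₀ (Set.Ioo 0 t₀))).sub h1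
      simpa using this
    refine h2.congr' ?_
    filter_upwards [eventually_mem_nhdsWithin] with s hs
    exact (hsplit s hs.1.le hs.2.le).symm
  -- key inequality
  have hkey : ∀ s ∈ Set.Ioo (0:ℝ) t₀, -(2 * F s) ≤ ∫ η in (0:ℝ)..t₀, f η := by
    intro s hs
    obtain ⟨hs0, hst⟩ := hs
    have hsT : s < T := lt_of_lt_of_le hst ht₀T
    have hts : (0:ℝ) < t₀ - s := by linarith
    have hf1 : IntervalIntegrable f volume 0 s :=
      hint.mono_set (by rw [uIcc_of_le hs0.le, uIcc_of_le ht₀0.le]; exact Icc_subset_Icc le_rfl hst.le)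
    have hf2 : IntervalIntegrable f volume s t₀ :=
      hint.mono_set (by rw [uIcc_of_le hst.le, uIcc_of_le ht₀0.le]; exact Icc_subset_Icc hs0.le le_rfl)
    have habs2 : IntervalIntegrable (fun η => |f η|) volume s t₀ := hf2.abs
    -- pointwise bound on |deriv v|
    have hbound : ∀ η : ℝ, s ≤ η → η < t₀ → |deriv v η| ≤ (t₀ - s) ^ ρ * |f η| := by
      intro η hηs hη
      have hpos : (0:ℝ) < t₀ - η := by linarith
      have he : |f η| = |deriv v η| * (t₀ - η) ^ (-ρ) := by
        rw [hfdef]; rw [abs_mul, abs_of_nonneg (Real.rpow_nonneg hpos.le _)]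
      have hcancel : (t₀ - η) ^ (-ρ) * (t₀ - η) ^ ρ = 1 := by
        rw [← Real.rpow_add hpos]; simp
      have hmono : (t₀ - η) ^ ρ ≤ (t₀ - s) ^ ρ :=
        Real.rpow_le_rpow (by linarith) (by linarith) hρ₀.le
      calc |deriv v η| = |f η| * (t₀ - η) ^ ρ := by
            rw [he, mul_assoc, hcancel, mul_one]
        _ ≤ |f η| * (t₀ - s) ^ ρ := by
            exact mul_le_mul_of_nonneg_left hmono (abs_nonneg _)
        _ = (t₀ - s) ^ ρ * |f η| := mul_comm _ _
    -- a.e. η ≠ t₀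
    have hne_ae : ∀ᵐ (η : ℝ) ∂volume, η ≠ t₀ := by
      rw [ae_iff]
      have : {a : ℝ | ¬a ≠ t₀} = {t₀} := by ext x; simp
      rw [this]
      exact Real.volume_singleton
    -- integrability of deriv v on [s, t₀]
    have hdint : IntervalIntegrable (deriv v) volume s t₀ := by
      rw [intervalIntegrable_iff_integrableOn_Ioc_of_le hst.le]
      have hgi : IntegrableOn (fun η => (t₀ - s) ^ ρ * |f η|) (Set.Ioc s t₀) :=
        ((intervalIntegrable_iff_integrableOn_Ioc_of_le hst.le).1 habs2).const_mul _
      refine hgi.integrable.mono' ((measurable_deriv v).aestronglyMeasurable) ?_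
      filter_upwards [ae_restrict_mem measurableSet_Ioc, ae_restrict_of_ae hne_ae] with η hη hηne
      have hηlt : η < t₀ := lt_of_le_of_ne hη.2 hηne
      simpa using hbound η hη.1.le hηlt
    -- FTC on [s, t₀]
    have hftc : ∫ η in s..t₀, deriv v η = v t₀ - v s := by
      refine integral_eq_sub_of_hasDeriv_right_of_le hst.le
        (hv.mono (Icc_subset_Icc hs0.le ht₀T)) (fun x hx => ?_) hdint
      exact (hvd x ⟨hs0.trans hx.1, lt_of_lt_of_le hx.2 ht₀T⟩).hasDerivWithinAt
    -- Claim B : (v t₀ - v s) * (t₀ - s)^(-ρ) ≤ F s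
    have hB : (v t₀ - v s) * (t₀ - s) ^ (-ρ) ≤ F s := by
      rw [← hftc, ← intervalIntegral.integral_mul_const]
      refine intervalIntegral.integral_mono_ae_restrict hst.le (hdint.mul_const _) habs2 ?_
      filter_upwards [ae_restrict_mem measurableSet_Icc, ae_restrict_of_ae hne_ae] with η hη hηne
      have hηlt : η < t₀ := lt_of_le_of_ne hη.2 hηne
      have h1 : |deriv v η| ≤ (t₀ - s) ^ ρ * |f η| := hbound η hη.1 hηlt
      have hA : (0:ℝ) < (t₀ - s) ^ ρ := Real.rpow_pos_of_pos hts ρ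
      have hinv : (t₀ - s) ^ (-ρ) = ((t₀ - s) ^ ρ)⁻¹ := by
        rw [Real.rpow_neg hts.le]
      calc deriv v η * (t₀ - s) ^ (-ρ) ≤ |deriv v η| * (t₀ - s) ^ (-ρ) := by
            refine mul_le_mul_of_nonneg_right (le_abs_self _) (Real.rpow_nonneg hts.le _)
        _ ≤ ((t₀ - s) ^ ρ * |f η|) * (t₀ - s) ^ (-ρ) := by
            refine mul_le_mul_of_nonneg_right h1 (Real.rpow_nonneg hts.le _)
        _ = |f η| := by
            rw [hinv]; field_simp
    -- Claim A : (v s - v t₀) * (t₀ - s)^(-ρ) ≤ ∫ η in 0..s, f η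
    have hA : (v s - v t₀) * (t₀ - s) ^ (-ρ) ≤ ∫ η in (0:ℝ)..s, f η := by
      set P : ℝ → ℝ := fun η => (v η - v t₀) * (t₀ - η) ^ (-ρ) with hPdef
      set c : ℝ → ℝ := fun η => (v η - v t₀) * (ρ * (t₀ - η) ^ (-ρ - 1)) with hcdef
      have hPderiv : ∀ x ∈ Set.Ioo (0:ℝ) s, HasDerivAt P (f x + c x) x := by
        intro x hx
        have hpos : (0:ℝ) < t₀ - x := by linarith [hx.2]
        have h1 : HasDerivAt (fun η : ℝ => t₀ - η) (-1) x := by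
          simpa using (hasDerivAt_id x).const_sub t₀
        have h2 : HasDerivAt (fun η : ℝ => (t₀ - η) ^ (-ρ)) (ρ * (t₀ - x) ^ (-ρ - 1)) x := by
          have := (Real.hasDerivAt_rpow_const (x := t₀ - x) (p := -ρ)
            (Or.inl hpos.ne')).comp x h1
          exact this.congr_deriv (by ring)
        have h3 : HasDerivAt (fun η : ℝ => v η - v t₀) (deriv v x) x :=
          (hvd x ⟨hx.1, lt_of_le_of_lt hx.2.le (lt_of_lt_of_le hst ht₀T)⟩).sub_const _
        have := h3.mul h2
        exact this
      have hwcont : ContinuousOn (fun η : ℝ => (t₀ - η) ^ (-ρ)) (Set.Icc 0 s) := by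
        refine (continuousOn_const.sub continuousOn_id).rpow_const fun x hx => Or.inl ?_
        have : x ≤ s := hx.2
        intro h; rw [Pi.sub_apply, sub_eq_zero] at h; simp only [id_eq] at h; linarith
      have hw2cont : ContinuousOn (fun η : ℝ => ρ * (t₀ - η) ^ (-ρ - 1)) (Set.Icc 0 s) := by
        refine continuousOn_const.mul ?_
        refine (continuousOn_const.sub continuousOn_id).rpow_const fun x hx => Or.inl ?_
        have : x ≤ s := hx.2
        intro h; rw [Pi.sub_apply, sub_eq_zero] at h; simp only [id_eq] at h; linarith
      have hvcont : ContinuousOn v (Set.Icc 0 s) := hv.mono (Icc_subset_Icc le_rfl hsT.le)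
      have hPcont : ContinuousOn P (Set.Icc 0 s) :=
        (hvcont.sub continuousOn_const).mul hwcont
      have hccont : ContinuousOn c (Set.Icc 0 s) :=
        (hvcont.sub continuousOn_const).mul hw2cont
      have hcint : IntervalIntegrable c volume 0 s := by
        refine hccont.intervalIntegrable_of_Icc hs0.le
      have hGint : IntervalIntegrable (fun η => f η + c η) volume 0 s := hf1.add hcint
      have hftcA : ∫ η in (0:ℝ)..s, (f η + c η) = P s - P 0 := by
        refine integral_eq_sub_of_hasDeriv_right_of_le hs0.le hPcont
          (fun x hx => (hPderiv x hx).hasDerivWithinAt) hGint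
      have hadd : ∫ η in (0:ℝ)..s, (f η + c η) =
          (∫ η in (0:ℝ)..s, f η) + ∫ η in (0:ℝ)..s, c η :=
        intervalIntegral.integral_add hf1 hcint
      have hcnonpos : ∫ η in (0:ℝ)..s, c η ≤ 0 := by
        rw [← neg_nonneg, ← intervalIntegral.integral_neg]
        refine intervalIntegral.integral_nonneg hs0.le fun u hu => ?_
        have hvle : v u ≤ v t₀ := hmax u ⟨hu.1, hu.2.trans hsT.le⟩
        have hnn : 0 ≤ ρ * (t₀ - u) ^ (-ρ - 1) :=
          mul_nonneg hρ₀.le (Real.rpow_nonneg (by linarith [hu.2]) _)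
        have := mul_nonneg (neg_nonneg.2 (sub_nonpos.2 hvle)) hnn
        simp only [hcdef]
        nlinarith
      have hP0 : P 0 ≤ 0 := by
        have hvle : v 0 ≤ v t₀ := hmax 0 ⟨le_rfl, hT.le⟩
        have hnn : (0:ℝ) ≤ (t₀ - 0) ^ (-ρ) := Real.rpow_nonneg (by linarith) _
        simp only [hPdef]
        exact mul_nonpos_of_nonpos_of_nonneg (sub_nonpos.2 hvle) hnn
      have : P s ≤ ∫ η in (0:ℝ)..s, f η := by
        have : (∫ η in (0:ℝ)..s, f η) = P s - P 0 - ∫ η in (0:ℝ)..s, c η := by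
          rw [← hftcA, hadd]; ring
        rw [this]; linarith
      simpa [hPdef] using this
    -- combine
    have hsum : (∫ η in (0:ℝ)..t₀, f η) = (∫ η in (0:ℝ)..s, f η) + ∫ η in s..t₀, f η :=
      (integral_add_adjacent_intervals hf1 hf2).symm
    have htail : -(F s) ≤ ∫ η in s..t₀, f η := by
      have h1 : |∫ η in s..t₀, f η| ≤ F s := by
        have := intervalIntegral.abs_integral_le_integral_abs (f := f) (μ := volume) hst.le
        simpa [hFdef] using this
      have := neg_abs_le (∫ η in s..t₀, f η)
      linarith [abs_le.1 h1]
    have hBneg : -(F s) ≤ (v s - v t₀) * (t₀ - s) ^ (-ρ) := by nlinarith [hB]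
    linarith [hA, htail, hBneg, hsum.le, hsum.ge]
  -- conclude
  have hne : (nhdsWithin t₀ (Set.Ioo 0 t₀)).NeBot := by
    refine mem_closure_iff_nhdsWithin_neBot.1 ?_
    rw [closure_Ioo (ne_of_lt ht₀0)]
    exact ⟨ht₀0.le, le_rfl⟩
  have hI : 0 ≤ ∫ η in (0:ℝ)..t₀, f η := by
    have h2F : Tendsto (fun s => 2 * F s) (nhdsWithin t₀ (Set.Ioo 0 t₀)) (nhds 0) := by
      simpa using hF0.const_mul 2
    have hev : ∀ᶠ s in nhdsWithin t₀ (Set.Ioo 0 t₀),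
        -(∫ η in (0:ℝ)..t₀, f η) ≤ 2 * F s := by
      filter_upwards [eventually_mem_nhdsWithin] with s hs
      linarith [hkey s hs]
    have := ge_of_tendsto h2F hev
    linarith
  positivity

lemma caputo_neg (ρ : ℝ) (v : ℝ → ℝ) (t : ℝ) :
    caputo ρ (fun x => -v x) t = -(caputo ρ v t) := by
  unfold caputo
  rw [← mul_neg, ← intervalIntegral.integral_neg]
  congr 1
  refine intervalIntegral.integral_congr fun η _ => ?_
  have : deriv (fun x => -v x) η = -deriv v η := deriv.neg
  rw [this]; ring

/-- Let `0 < ρ < 1` and let `v` be continuous on `[0,T]`, differentiable on `(0,T)`, with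
Caputo derivative `D^ρ v` continuous on `[0,T]`.
(a) If `t₀ ∈ (0,T]` is a maximum point of `v` over `[0,T]`, then `D^ρ v(t₀) ≥ 0`.
(b) If `t₀ ∈ (0,T]` is a minimum point of `v` over `[0,T]`, then `D^ρ v(t₀) ≤ 0`. -/
theorem caputo_extremum_principle (ρ T : ℝ) (hρ₀ : 0 < ρ) (hρ₁ : ρ < 1) (hT : 0 < T)
    (v : ℝ → ℝ) (hv : ContinuousOn v (Set.Icc 0 T))
    (hv' : DifferentiableOn ℝ v (Set.Ioo 0 T))
    (hcap : ContinuousOn (caputo ρ v) (Set.Icc 0 T))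
    (t₀ : ℝ) (ht₀ : t₀ ∈ Set.Ioc 0 T) :
    ((∀ t ∈ Set.Icc 0 T, v t ≤ v t₀) → 0 ≤ caputo ρ v t₀) ∧
    ((∀ t ∈ Set.Icc 0 T, v t₀ ≤ v t) → caputo ρ v t₀ ≤ 0) := by
  obtain ⟨ht₀0, ht₀T⟩ := ht₀
  constructor
  · intro hmax
    exact caputo_max_aux ρ T hρ₀ hρ₁ hT v hv hv' t₀ ht₀0 ht₀T hmax
  · intro hmin
    have h := caputo_max_aux ρ T hρ₀ hρ₁ hT (fun x => -v x) hv.neg hv'.neg t₀ ht₀0 ht₀T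
      (fun t ht => neg_le_neg (hmin t ht))
    rw [caputo_neg] at h
    linarith
end

section
/- Let l > 0, T > 0, and let f : [0,l] × [0,T] → ℝ be continuous, three times continuously differentiable in x with ∂³f/∂x³ continuous on [0,l] × [0,T], and satisfy f(0,t) = f(l,t) = ∂²f/∂x²(0,t) = ∂²f/∂x²(l,t) = 0 for all t ∈ [0,T]. Then for every t ∈ [0,T], ∑_{k=1}^∞ λ_k² |f_k(t)| ≤ (l/√6) · sup_{s∈[0,T]} (∫₀^l |∂³f/∂x³(x,s)|² dx)^{1/2}. -/
open Real Set MeasureTheory intervalIntegral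

private lemma ibp_aux {l : ℝ} (hl : 0 < l) {u v u' v' : ℝ → ℝ}
    (hu : ContinuousOn u (Set.Icc 0 l)) (hv : Continuous v)
    (hder : ∀ x ∈ Set.Ioo 0 l, HasDerivAt u (u' x) x)
    (hv' : ∀ x : ℝ, HasDerivAt v (v' x) x)
    (hu'c : ContinuousOn u' (Set.Icc 0 l)) (hv'c : Continuous v') :
    ∫ x in (0:ℝ)..l, (u' x * v x + u x * v' x) = u l * v l - u 0 * v 0 := by
  have hint : IntervalIntegrable (fun x => u' x * v x + u x * v' x) volume 0 l := by
    apply ContinuousOn.intervalIntegrable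
    rw [Set.uIcc_of_le hl.le]
    exact (hu'c.mul hv.continuousOn).add (hu.mul hv'c.continuousOn)
  exact integral_eq_sub_of_hasDeriv_right_of_le hl.le (hu.mul hv.continuousOn)
    (fun x hx => ((hder x hx).mul (hv' x)).hasDerivWithinAt) hint

private lemma hasDerivAt_lam_mul (lam x : ℝ) : HasDerivAt (fun y : ℝ => lam * y) lam x := by
  simpa using (hasDerivAt_id x).const_mul lam

private lemma ibp_sin {l lam : ℝ} (hl : 0 < l) (hlam : lam ≠ 0) {u u' : ℝ → ℝ}
    (hu : ContinuousOn u (Set.Icc 0 l)) (hu'c : ContinuousOn u' (Set.Icc 0 l))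
    (hder : ∀ x ∈ Set.Ioo 0 l, HasDerivAt u (u' x) x)
    (h0 : u 0 = 0) (hl0 : u l = 0) :
    ∫ x in (0:ℝ)..l, u x * Real.sin (lam * x)
      = (1/lam) * ∫ x in (0:ℝ)..l, u' x * Real.cos (lam * x) := by
  set v : ℝ → ℝ := fun y => -Real.cos (lam * y) / lam with hv_def
  have hv' : ∀ x : ℝ, HasDerivAt v (Real.sin (lam * x)) x := by
    intro x
    have h2 := (Real.hasDerivAt_cos (lam * x)).comp x (hasDerivAt_lam_mul lam x)
    have h3 := h2.neg.div_const lam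
    refine h3.congr_deriv ?_
    field_simp
  have hvc : Continuous v := by
    exact ((Real.continuous_cos.comp (continuous_const.mul continuous_id)).neg).div_const lam
  have key := ibp_aux hl hu hvc hder hv' hu'c
    (Real.continuous_sin.comp (continuous_const.mul continuous_id))
  rw [h0, hl0, zero_mul, zero_mul, sub_zero] at key
  have i1 : IntervalIntegrable (fun x => u' x * v x) volume 0 l := by
    apply ContinuousOn.intervalIntegrable
    rw [Set.uIcc_of_le hl.le]; exact hu'c.mul hvc.continuousOn
  have i2 : IntervalIntegrable (fun x => u x * Real.sin (lam * x)) volume 0 l := by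
    apply ContinuousOn.intervalIntegrable
    rw [Set.uIcc_of_le hl.le]
    exact hu.mul (Real.continuous_sin.comp (continuous_const.mul continuous_id)).continuousOn
  rw [integral_add i1 i2] at key
  have e1 : ∫ x in (0:ℝ)..l, u' x * v x
      = -(1/lam) * ∫ x in (0:ℝ)..l, u' x * Real.cos (lam * x) := by
    rw [← intervalIntegral.integral_const_mul]
    apply intervalIntegral.integral_congr
    intro x _
    simp only [hv_def]
    field_simp
  rw [e1] at key
  linarith

private lemma ibp_cos {l lam : ℝ} (hl : 0 < l) (hlam : lam ≠ 0)
    (hsl : Real.sin (lam * l) = 0) {u u' : ℝ → ℝ}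
    (hu : ContinuousOn u (Set.Icc 0 l)) (hu'c : ContinuousOn u' (Set.Icc 0 l))
    (hder : ∀ x ∈ Set.Ioo 0 l, HasDerivAt u (u' x) x) :
    ∫ x in (0:ℝ)..l, u x * Real.cos (lam * x)
      = -(1/lam) * ∫ x in (0:ℝ)..l, u' x * Real.sin (lam * x) := by
  set v : ℝ → ℝ := fun y => Real.sin (lam * y) / lam with hv_def
  have hv' : ∀ x : ℝ, HasDerivAt v (Real.cos (lam * x)) x := by
    intro x
    have h2 := (Real.hasDerivAt_sin (lam * x)).comp x (hasDerivAt_lam_mul lam x)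
    have h3 := h2.div_const lam
    refine h3.congr_deriv ?_
    field_simp
  have hvc : Continuous v := by
    exact (Real.continuous_sin.comp (continuous_const.mul continuous_id)).div_const lam
  have key := ibp_aux hl hu hvc hder hv' hu'c
    (Real.continuous_cos.comp (continuous_const.mul continuous_id))
  have hb : u l * v l - u 0 * v 0 = 0 := by
    simp only [hv_def, hsl, mul_zero, zero_div, Real.sin_zero]
    ring
  rw [hb] at key
  have i1 : IntervalIntegrable (fun x => u' x * v x) volume 0 l := by
    apply ContinuousOn.intervalIntegrable
    rw [Set.uIcc_of_le hl.le]; exact hu'c.mul hvc.continuousOn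
  have i2 : IntervalIntegrable (fun x => u x * Real.cos (lam * x)) volume 0 l := by
    apply ContinuousOn.intervalIntegrable
    rw [Set.uIcc_of_le hl.le]
    exact hu.mul (Real.continuous_cos.comp (continuous_const.mul continuous_id)).continuousOn
  rw [integral_add i1 i2] at key
  have e1 : ∫ x in (0:ℝ)..l, u' x * v x
      = (1/lam) * ∫ x in (0:ℝ)..l, u' x * Real.sin (lam * x) := by
    rw [← intervalIntegral.integral_const_mul]
    apply intervalIntegral.integral_congr
    intro x _
    simp only [hv_def]
    field_simp
  rw [e1] at key
  linarith

private lemma hasDerivAt_lam_mul' (lam x : ℝ) : HasDerivAt (fun y : ℝ => lam * y) lam x := by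
  simpa using (hasDerivAt_id x).const_mul lam

private lemma integral_cos_lam {l c : ℝ} (hc : c ≠ 0) :
    ∫ x in (0:ℝ)..l, Real.cos (c * x) = Real.sin (c * l) / c := by
  have hder : ∀ x ∈ Set.uIcc (0:ℝ) l, HasDerivAt (fun y => Real.sin (c * y) / c)
      (Real.cos (c * x)) x := by
    intro x _
    have h2 := (Real.hasDerivAt_sin (c * x)).comp x (hasDerivAt_lam_mul' c x)
    have h3 := h2.div_const c
    refine h3.congr_deriv ?_
    field_simp
  rw [intervalIntegral.integral_eq_sub_of_hasDerivAt hder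
    ((Real.continuous_cos.comp (continuous_const.mul continuous_id)).intervalIntegrable 0 l)]
  simp

private lemma cos_orth {l : ℝ} (hl : 0 < l) (j k : ℕ) :
    ∫ x in (0:ℝ)..l, Real.cos (π * ((j:ℝ)+1) / l * x) * Real.cos (π * ((k:ℝ)+1) / l * x)
      = if j = k then l / 2 else 0 := by
  set a : ℝ := π * ((j:ℝ) - (k:ℝ)) / l with ha_def
  set b : ℝ := π * ((j:ℝ) + (k:ℝ) + 2) / l with hb_def
  have hb : b ≠ 0 := by
    simp only [hb_def]
    positivity
  have hsb : Real.sin (b * l) = 0 := by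
    have : b * l = ((j + k + 2 : ℕ) : ℝ) * π := by
      rw [hb_def]; field_simp
      push_cast
      ring
    rw [this, Real.sin_nat_mul_pi]
  have hid : ∀ x : ℝ, Real.cos (π * ((j:ℝ)+1) / l * x) * Real.cos (π * ((k:ℝ)+1) / l * x)
      = (Real.cos (a * x) + Real.cos (b * x)) / 2 := by
    intro x
    have h1 : a * x = π * ((j:ℝ)+1) / l * x - π * ((k:ℝ)+1) / l * x := by
      simp only [ha_def]; ring
    have h2 : b * x = π * ((j:ℝ)+1) / l * x + π * ((k:ℝ)+1) / l * x := by
      simp only [hb_def]; ring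
    rw [h1, h2, Real.cos_sub, Real.cos_add]
    ring
  simp only [hid]
  have ia : IntervalIntegrable (fun x => Real.cos (a * x)) volume 0 l :=
    (Real.continuous_cos.comp (continuous_const.mul continuous_id)).intervalIntegrable 0 l
  have ib : IntervalIntegrable (fun x => Real.cos (b * x)) volume 0 l :=
    (Real.continuous_cos.comp (continuous_const.mul continuous_id)).intervalIntegrable 0 l
  rw [intervalIntegral.integral_div, intervalIntegral.integral_add ia ib]
  by_cases hjk : j = k
  · subst hjk
    have ha0 : a = 0 := by simp [ha_def]
    have : ∫ x in (0:ℝ)..l, Real.cos (a * x) = l := by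
      simp [ha0]
    rw [this, integral_cos_lam hb, hsb, if_pos rfl]
    simp
  · have hd : (j:ℝ) - (k:ℝ) ≠ 0 := by
      intro h
      exact hjk (by exact_mod_cast sub_eq_zero.mp h)
    have ha : a ≠ 0 := by
      simp only [ha_def]
      exact div_ne_zero (mul_ne_zero Real.pi_ne_zero hd) hl.ne'
    have hsa : Real.sin (a * l) = 0 := by
      have : a * l = ((j - k : ℤ) : ℝ) * π := by
        rw [ha_def]; field_simp
        push_cast
        ring
      rw [this, Real.sin_int_mul_pi]
    rw [integral_cos_lam ha, integral_cos_lam hb, hsa, hsb, if_neg hjk]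
    simp

set_option maxHeartbeats 2000000 in
private lemma bessel {l : ℝ} (hl : 0 < l) {h : ℝ → ℝ}
    (hcont : ContinuousOn h (Set.Icc 0 l)) (n : ℕ) :
    ∑ k ∈ Finset.range n, (Real.sqrt (2/l) *
        ∫ x in (0:ℝ)..l, h x * Real.cos (π * ((k:ℝ)+1) / l * x)) ^ 2
      ≤ ∫ x in (0:ℝ)..l, (h x) ^ 2 := by
  have hs2 : Real.sqrt (2/l) ^ 2 = 2 / l := Real.sq_sqrt (by positivity)
  set c : ℕ → ℝ := fun k =>
    Real.sqrt (2/l) * ∫ x in (0:ℝ)..l, h x * Real.cos (π * ((k:ℝ)+1) / l * x) with hc_def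
  show ∑ k ∈ Finset.range n, c k ^ 2 ≤ _
  have hec : ∀ k : ℕ, Continuous (fun x => Real.cos (π * ((k:ℝ)+1) / l * x)) := fun k =>
    Real.continuous_cos.comp (continuous_const.mul continuous_id)
  set q : ℝ → ℝ := fun x =>
    ∑ k ∈ Finset.range n, c k * (Real.sqrt (2/l) * Real.cos (π * ((k:ℝ)+1) / l * x)) with hq_def
  have hqc : Continuous q :=
    continuous_finset_sum _ (fun k _ => continuous_const.mul (continuous_const.mul (hec k)))
  clear_value c q
  have ihe : ∀ k : ℕ, IntervalIntegrable
      (fun x => h x * Real.cos (π * ((k:ℝ)+1) / l * x)) volume 0 l := by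
    intro k
    apply ContinuousOn.intervalIntegrable
    rw [Set.uIcc_of_le hl.le]; exact hcont.mul (hec k).continuousOn
  have ih2 : IntervalIntegrable (fun x => h x ^ 2) volume 0 l := by
    apply ContinuousOn.intervalIntegrable
    rw [Set.uIcc_of_le hl.le]; exact hcont.pow 2
  have ihq : IntervalIntegrable (fun x => h x * q x) volume 0 l := by
    apply ContinuousOn.intervalIntegrable
    rw [Set.uIcc_of_le hl.le]; exact hcont.mul hqc.continuousOn
  have iq2 : IntervalIntegrable (fun x => q x ^ 2) volume 0 l :=
    (hqc.pow 2).intervalIntegrable 0 l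
  have horth : ∀ j k : ℕ,
      (∫ x in (0:ℝ)..l, (Real.sqrt (2/l) * Real.cos (π * ((j:ℝ)+1) / l * x)) *
        (Real.sqrt (2/l) * Real.cos (π * ((k:ℝ)+1) / l * x)))
      = if j = k then 1 else 0 := by
    intro j k
    have e1 : (fun x => (Real.sqrt (2/l) * Real.cos (π * ((j:ℝ)+1) / l * x)) *
        (Real.sqrt (2/l) * Real.cos (π * ((k:ℝ)+1) / l * x)))
        = fun x => (2/l) * (Real.cos (π * ((j:ℝ)+1) / l * x) *
            Real.cos (π * ((k:ℝ)+1) / l * x)) := by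
      funext x
      have hr : ∀ A B C : ℝ, (C * A) * (C * B) = C ^ 2 * (A * B) := by intros; ring
      rw [hr, hs2]
    rw [e1, intervalIntegral.integral_const_mul, cos_orth hl j k]
    by_cases hjk : j = k
    · rw [if_pos hjk, if_pos hjk]
      field_simp
    · rw [if_neg hjk, if_neg hjk, mul_zero]
  have hHQ : ∫ x in (0:ℝ)..l, h x * q x = ∑ k ∈ Finset.range n, c k ^ 2 := by
    have e1 : (fun x => h x * q x) = fun x => ∑ k ∈ Finset.range n,
        (c k * Real.sqrt (2/l)) * (h x * Real.cos (π * ((k:ℝ)+1) / l * x)) := by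
      funext x
      simp only [hq_def, Finset.mul_sum]
      exact Finset.sum_congr rfl (fun k _ => by ring)
    rw [e1, intervalIntegral.integral_finset_sum (fun k _ => (ihe k).const_mul _)]
    refine Finset.sum_congr rfl (fun k _ => ?_)
    rw [intervalIntegral.integral_const_mul]
    simp only [hc_def]
    ring
  have iorth : ∀ j k : ℕ, IntervalIntegrable (fun x =>
      (Real.sqrt (2/l) * Real.cos (π * ((j:ℝ)+1) / l * x)) *
      (Real.sqrt (2/l) * Real.cos (π * ((k:ℝ)+1) / l * x))) volume 0 l := fun j k =>
    ((continuous_const.mul (hec j)).mul (continuous_const.mul (hec k))).intervalIntegrable 0 l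
  have inner : ∀ j ∈ Finset.range n, (∫ x in (0:ℝ)..l,
      (Real.sqrt (2/l) * Real.cos (π * ((j:ℝ)+1) / l * x)) * q x) = c j := by
    intro j hj
    have e1 : (fun x => (Real.sqrt (2/l) * Real.cos (π * ((j:ℝ)+1) / l * x)) * q x)
        = fun x => ∑ k ∈ Finset.range n, c k *
          ((Real.sqrt (2/l) * Real.cos (π * ((j:ℝ)+1) / l * x)) *
           (Real.sqrt (2/l) * Real.cos (π * ((k:ℝ)+1) / l * x))) := by
      funext x
      simp only [hq_def, Finset.mul_sum]
      exact Finset.sum_congr rfl (fun k _ => by ring)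
    rw [e1, intervalIntegral.integral_finset_sum (fun k _ => (iorth j k).const_mul _)]
    have e2 : ∀ k ∈ Finset.range n, (∫ x in (0:ℝ)..l, c k *
        ((Real.sqrt (2/l) * Real.cos (π * ((j:ℝ)+1) / l * x)) *
         (Real.sqrt (2/l) * Real.cos (π * ((k:ℝ)+1) / l * x))))
        = if j = k then c k else 0 := by
      intro k _
      rw [intervalIntegral.integral_const_mul, horth j k]
      by_cases hjk : j = k
      · rw [if_pos hjk, if_pos hjk, mul_one]
      · rw [if_neg hjk, if_neg hjk, mul_zero]
    rw [Finset.sum_congr rfl e2, Finset.sum_ite_eq, if_pos hj]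
  have hQQ : ∫ x in (0:ℝ)..l, q x ^ 2 = ∑ k ∈ Finset.range n, c k ^ 2 := by
    have e1 : (fun x => q x ^ 2) = fun x => ∑ j ∈ Finset.range n,
        c j * ((Real.sqrt (2/l) * Real.cos (π * ((j:ℝ)+1) / l * x)) * q x) := by
      funext x
      have hx : q x = ∑ j ∈ Finset.range n, c j *
          (Real.sqrt (2/l) * Real.cos (π * ((j:ℝ)+1) / l * x)) := by rw [hq_def]
      rw [sq]
      nth_rewrite 1 [hx]
      rw [Finset.sum_mul]
      exact Finset.sum_congr rfl (fun j _ => by ring)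
    rw [e1, intervalIntegral.integral_finset_sum (f := fun j x => c j *
      ((Real.sqrt (2/l) * Real.cos (π * ((j:ℝ)+1) / l * x)) * q x)) (fun j _ =>
      (continuous_const.mul ((continuous_const.mul (hec j)).mul hqc)).intervalIntegrable 0 l)]
    refine Finset.sum_congr rfl (fun j hj => ?_)
    rw [intervalIntegral.integral_const_mul, inner j hj, sq]
  have expand : ∫ x in (0:ℝ)..l, (h x - q x) ^ 2
      = (∫ x in (0:ℝ)..l, h x ^ 2) - ∑ k ∈ Finset.range n, c k ^ 2 := by
    have e1 : (fun x => (h x - q x) ^ 2)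
        = fun x => (h x ^ 2 - 2 * (h x * q x)) + q x ^ 2 := by
      funext x; ring
    rw [e1, intervalIntegral.integral_add (ih2.sub (ihq.const_mul 2)) iq2,
      intervalIntegral.integral_sub ih2 (ihq.const_mul 2),
      intervalIntegral.integral_const_mul, hHQ, hQQ]
    ring
  have pos : 0 ≤ ∫ x in (0:ℝ)..l, (h x - q x) ^ 2 :=
    intervalIntegral.integral_nonneg hl.le (fun x _ => sq_nonneg _)
  rw [expand] at pos
  linarith

private lemma hasDerivAt_iter {l : ℝ} (hl : 0 < l) {g : ℝ → ℝ}
    (hg : ContDiffOn ℝ 3 g (Set.Icc 0 l)) (j : ℕ) (hj : j < 3) {x : ℝ}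
    (hx : x ∈ Set.Ioo 0 l) :
    HasDerivAt (iteratedDerivWithin j g (Set.Icc 0 l))
      (iteratedDerivWithin (j+1) g (Set.Icc 0 l) x) x := by
  have hxm : x ∈ Set.Icc 0 l := Set.mem_Icc_of_Ioo hx
  have hnhds : Set.Icc 0 l ∈ nhds x := Icc_mem_nhds hx.1 hx.2
  have hdiff : DifferentiableWithinAt ℝ (iteratedDerivWithin j g (Set.Icc 0 l))
      (Set.Icc 0 l) x :=
    hg.differentiableOn_iteratedDerivWithin (by exact_mod_cast hj) (uniqueDiffOn_Icc hl) x hxm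
  have hd : DifferentiableAt ℝ (iteratedDerivWithin j g (Set.Icc 0 l)) x :=
    hdiff.differentiableAt hnhds
  have heq : iteratedDerivWithin (j+1) g (Set.Icc 0 l) x
      = deriv (iteratedDerivWithin j g (Set.Icc 0 l)) x := by
    rw [iteratedDerivWithin_succ, derivWithin_of_mem_nhds hnhds]
  rw [heq]
  exact hd.hasDerivAt

private lemma basel_partial (n : ℕ) :
    ∑ k ∈ Finset.range n, (1:ℝ)/((k:ℝ)+1)^2 ≤ π^2/6 := by
  have h1 : ∑ j ∈ Finset.range (n+1), (1:ℝ)/((j:ℝ))^2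
      = ∑ k ∈ Finset.range n, (1:ℝ)/((k:ℝ)+1)^2 := by
    rw [Finset.sum_range_succ']
    push_cast
    simp
  rw [← h1]
  exact sum_le_hasSum _ (fun i _ => by positivity) hasSum_zeta_two
/-- Lemma 3.8 (first estimate): if `f` is continuous on `[0,l]×[0,T]`, three times
continuously differentiable in `x` with `∂³f/∂x³` jointly continuous, and
`f(0,t) = f(l,t) = ∂²f/∂x²(0,t) = ∂²f/∂x²(l,t) = 0`, then for every `t ∈ [0,T]`,
`∑_{k=1}^∞ λ_k² |f_k(t)| ≤ (l/√6) ⬝ sup_{s∈[0,T]} ‖∂³f/∂x³(·,s)‖_{L²(0,l)}`,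
where `λ_k = πk/l` and `f_k(t) = √(2/l) ∫₀^l f(x,t) sin(λ_k x) dx`. -/
theorem fourier_coeff_sum_estimate (l T : ℝ) (hl : 0 < l) (hT : 0 < T)
    (f : ℝ → ℝ → ℝ)
    (hfc : ContinuousOn (fun p : ℝ × ℝ => f p.1 p.2) (Set.Icc 0 l ×ˢ Set.Icc 0 T))
    (hfx : ∀ t ∈ Set.Icc 0 T, ContDiffOn ℝ 3 (fun x => f x t) (Set.Icc 0 l))
    (hf3c : ContinuousOn
      (fun p : ℝ × ℝ => iteratedDerivWithin 3 (fun x => f x p.2) (Set.Icc 0 l) p.1)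
      (Set.Icc 0 l ×ˢ Set.Icc 0 T))
    (hb0 : ∀ t ∈ Set.Icc 0 T, f 0 t = 0)
    (hbl : ∀ t ∈ Set.Icc 0 T, f l t = 0)
    (hb20 : ∀ t ∈ Set.Icc 0 T, iteratedDerivWithin 2 (fun x => f x t) (Set.Icc 0 l) 0 = 0)
    (hb2l : ∀ t ∈ Set.Icc 0 T, iteratedDerivWithin 2 (fun x => f x t) (Set.Icc 0 l) l = 0) :
    ∀ t ∈ Set.Icc 0 T,
      Summable (fun k : ℕ => (π * ((k : ℝ) + 1) / l) ^ 2 *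
        |Real.sqrt (2 / l) * ∫ x in (0:ℝ)..l, f x t * Real.sin (π * ((k : ℝ) + 1) / l * x)|) ∧
      (∑' k : ℕ, (π * ((k : ℝ) + 1) / l) ^ 2 *
          |Real.sqrt (2 / l) * ∫ x in (0:ℝ)..l, f x t * Real.sin (π * ((k : ℝ) + 1) / l * x)|)
        ≤ l / Real.sqrt 6 *
          sSup ((fun s => Real.sqrt (∫ x in (0:ℝ)..l,
            (iteratedDerivWithin 3 (fun y => f y s) (Set.Icc 0 l) x) ^ 2)) '' Set.Icc 0 T) := by
  intro t ht
  have hg : ContDiffOn ℝ 3 (fun x => f x t) (Set.Icc 0 l) := hfx t ht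
  have hudo : UniqueDiffOn ℝ (Set.Icc (0:ℝ) l) := uniqueDiffOn_Icc hl
  -- continuity of the iterated derivatives
  have hc0 : ContinuousOn (fun x => f x t) (Set.Icc 0 l) := hg.continuousOn
  have hc1 : ContinuousOn (iteratedDerivWithin 1 (fun x => f x t) (Set.Icc 0 l))
      (Set.Icc 0 l) := hg.continuousOn_iteratedDerivWithin (by norm_num) hudo
  have hc2 : ContinuousOn (iteratedDerivWithin 2 (fun x => f x t) (Set.Icc 0 l))
      (Set.Icc 0 l) := hg.continuousOn_iteratedDerivWithin (by norm_num) hudo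
  have hc3 : ContinuousOn (iteratedDerivWithin 3 (fun x => f x t) (Set.Icc 0 l))
      (Set.Icc 0 l) := hg.continuousOn_iteratedDerivWithin (by norm_num) hudo
  -- derivative facts
  have hd0 : ∀ x ∈ Set.Ioo 0 l, HasDerivAt (fun x => f x t)
      (iteratedDerivWithin 1 (fun x => f x t) (Set.Icc 0 l) x) x := by
    intro x hx
    have h := hasDerivAt_iter hl hg 0 (by norm_num) hx
    rwa [iteratedDerivWithin_zero] at h
  have hd1 : ∀ x ∈ Set.Ioo 0 l, HasDerivAt (iteratedDerivWithin 1 (fun x => f x t) (Set.Icc 0 l))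
      (iteratedDerivWithin 2 (fun x => f x t) (Set.Icc 0 l) x) x := fun x hx =>
    hasDerivAt_iter hl hg 1 (by norm_num) hx
  have hd2 : ∀ x ∈ Set.Ioo 0 l, HasDerivAt (iteratedDerivWithin 2 (fun x => f x t) (Set.Icc 0 l))
      (iteratedDerivWithin 3 (fun x => f x t) (Set.Icc 0 l) x) x := fun x hx =>
    hasDerivAt_iter hl hg 2 (by norm_num) hx
  -- frequencies
  have hlampos : ∀ k : ℕ, 0 < π * ((k:ℝ)+1) / l := by
    intro k
    have : (0:ℝ) < (k:ℝ) + 1 := by positivity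
    positivity
  have hlamne : ∀ k : ℕ, π * ((k:ℝ)+1) / l ≠ 0 := fun k => (hlampos k).ne'
  have hsl : ∀ k : ℕ, Real.sin (π * ((k:ℝ)+1) / l * l) = 0 := by
    intro k
    have h1 : π * ((k:ℝ)+1) / l * l = ((k+1 : ℕ) : ℝ) * π := by
      field_simp
      push_cast
      ring
    rw [h1, Real.sin_nat_mul_pi]
  -- integration by parts, three times
  have key : ∀ k : ℕ, ∫ x in (0:ℝ)..l, f x t * Real.sin (π * ((k:ℝ)+1) / l * x)
      = -(1/(π * ((k:ℝ)+1) / l)^3) * ∫ x in (0:ℝ)..l,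
          iteratedDerivWithin 3 (fun x => f x t) (Set.Icc 0 l) x *
            Real.cos (π * ((k:ℝ)+1) / l * x) := by
    intro k
    have hA : ∫ x in (0:ℝ)..l, f x t * Real.sin (π * ((k:ℝ)+1) / l * x)
        = (1/(π * ((k:ℝ)+1) / l)) * ∫ x in (0:ℝ)..l,
            iteratedDerivWithin 1 (fun x => f x t) (Set.Icc 0 l) x *
              Real.cos (π * ((k:ℝ)+1) / l * x) :=
      ibp_sin hl (hlamne k) hc0 hc1 hd0 (hb0 t ht) (hbl t ht)
    have hB : ∫ x in (0:ℝ)..l, iteratedDerivWithin 1 (fun x => f x t) (Set.Icc 0 l) x *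
          Real.cos (π * ((k:ℝ)+1) / l * x)
        = -(1/(π * ((k:ℝ)+1) / l)) * ∫ x in (0:ℝ)..l,
            iteratedDerivWithin 2 (fun x => f x t) (Set.Icc 0 l) x *
              Real.sin (π * ((k:ℝ)+1) / l * x) :=
      ibp_cos hl (hlamne k) (hsl k) hc1 hc2 hd1
    have hC : ∫ x in (0:ℝ)..l, iteratedDerivWithin 2 (fun x => f x t) (Set.Icc 0 l) x *
          Real.sin (π * ((k:ℝ)+1) / l * x)
        = (1/(π * ((k:ℝ)+1) / l)) * ∫ x in (0:ℝ)..l,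
            iteratedDerivWithin 3 (fun x => f x t) (Set.Icc 0 l) x *
              Real.cos (π * ((k:ℝ)+1) / l * x) :=
      ibp_sin hl (hlamne k) hc2 hc3 hd2 (hb20 t ht) (hb2l t ht)
    rw [hA, hB, hC]
    have h := hlamne k
    field_simp
  -- rewrite the summands
  have termEq : ∀ k : ℕ, (π * ((k:ℝ)+1) / l) ^ 2 *
        |Real.sqrt (2/l) * ∫ x in (0:ℝ)..l, f x t * Real.sin (π * ((k:ℝ)+1) / l * x)|
      = (1/(π * ((k:ℝ)+1) / l)) * (Real.sqrt (2/l) * ∫ x in (0:ℝ)..l,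
          iteratedDerivWithin 3 (fun x => f x t) (Set.Icc 0 l) x *
            Real.cos (π * ((k:ℝ)+1) / l * x)
          |> fun y => |y|) := by
    intro k
    rw [key k]
    have hpos := hlampos k
    rw [show Real.sqrt (2/l) * (-(1/(π * ((k:ℝ)+1) / l)^3) * ∫ x in (0:ℝ)..l,
          iteratedDerivWithin 3 (fun x => f x t) (Set.Icc 0 l) x *
            Real.cos (π * ((k:ℝ)+1) / l * x))
        = -((1/(π * ((k:ℝ)+1) / l)^3) * (Real.sqrt (2/l) * ∫ x in (0:ℝ)..l,
          iteratedDerivWithin 3 (fun x => f x t) (Set.Icc 0 l) x *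
            Real.cos (π * ((k:ℝ)+1) / l * x))) from by ring]
    rw [abs_neg, abs_mul, abs_of_nonneg (by positivity : (0:ℝ) ≤ 1/(π * ((k:ℝ)+1) / l)^3)]
    have h := (hlampos k).ne'
    field_simp
  -- the L² norm at time t
  set B : ℝ := ∫ x in (0:ℝ)..l, (iteratedDerivWithin 3 (fun x => f x t) (Set.Icc 0 l) x) ^ 2
    with hB_def
  have hBnn : 0 ≤ B :=
    intervalIntegral.integral_nonneg hl.le (fun x _ => sq_nonneg _)
  -- partial sums bound
  have partial_bound : ∀ n : ℕ, ∑ k ∈ Finset.range n, (π * ((k:ℝ)+1) / l) ^ 2 *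
        |Real.sqrt (2/l) * ∫ x in (0:ℝ)..l, f x t * Real.sin (π * ((k:ℝ)+1) / l * x)|
      ≤ l / Real.sqrt 6 * Real.sqrt B := by
    intro n
    have hsum_eq : ∑ k ∈ Finset.range n, (π * ((k:ℝ)+1) / l) ^ 2 *
          |Real.sqrt (2/l) * ∫ x in (0:ℝ)..l, f x t * Real.sin (π * ((k:ℝ)+1) / l * x)|
        = ∑ k ∈ Finset.range n, (1/(π * ((k:ℝ)+1) / l)) *
            |Real.sqrt (2/l) * ∫ x in (0:ℝ)..l,
              iteratedDerivWithin 3 (fun x => f x t) (Set.Icc 0 l) x *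
                Real.cos (π * ((k:ℝ)+1) / l * x)| :=
      Finset.sum_congr rfl (fun k _ => termEq k)
    rw [hsum_eq]
    -- Cauchy-Schwarz
    have hCS := Finset.sum_mul_sq_le_sq_mul_sq (Finset.range n)
      (fun k => 1/(π * ((k:ℝ)+1) / l))
      (fun k => |Real.sqrt (2/l) * ∫ x in (0:ℝ)..l,
        iteratedDerivWithin 3 (fun x => f x t) (Set.Icc 0 l) x *
          Real.cos (π * ((k:ℝ)+1) / l * x)|)
    -- bound on the λ sum
    have hlamsum : ∑ k ∈ Finset.range n, (1/(π * ((k:ℝ)+1) / l)) ^ 2 ≤ l^2/6 := by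
      have e1 : ∀ k ∈ Finset.range n, (1/(π * ((k:ℝ)+1) / l)) ^ 2
          = (l/π)^2 * ((1:ℝ)/((k:ℝ)+1)^2) := by
        intro k _
        have h1 : ((k:ℝ)+1) ≠ 0 := by positivity
        field_simp
      rw [Finset.sum_congr rfl e1, ← Finset.mul_sum]
      have h2 := basel_partial n
      have h3 : (0:ℝ) ≤ (l/π)^2 := sq_nonneg _
      calc (l/π)^2 * ∑ k ∈ Finset.range n, (1:ℝ)/((k:ℝ)+1)^2
          ≤ (l/π)^2 * (π^2/6) := by nlinarith
        _ = l^2/6 := by field_simp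
    -- Bessel bound
    have habs_eq : ∀ k ∈ Finset.range n, |Real.sqrt (2/l) * ∫ x in (0:ℝ)..l,
          iteratedDerivWithin 3 (fun x => f x t) (Set.Icc 0 l) x *
            Real.cos (π * ((k:ℝ)+1) / l * x)| ^ 2
        = (Real.sqrt (2/l) * ∫ x in (0:ℝ)..l,
            iteratedDerivWithin 3 (fun x => f x t) (Set.Icc 0 l) x *
              Real.cos (π * ((k:ℝ)+1) / l * x)) ^ 2 :=
      fun k _ => sq_abs _
    have hbessel := bessel hl hc3 n
    have hbessel' : ∑ k ∈ Finset.range n, |Real.sqrt (2/l) * ∫ x in (0:ℝ)..l,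
          iteratedDerivWithin 3 (fun x => f x t) (Set.Icc 0 l) x *
            Real.cos (π * ((k:ℝ)+1) / l * x)| ^ 2 ≤ B := by
      rw [Finset.sum_congr rfl habs_eq]
      exact hbessel
    -- combine
    set S : ℝ := ∑ k ∈ Finset.range n, (1/(π * ((k:ℝ)+1) / l)) *
        |Real.sqrt (2/l) * ∫ x in (0:ℝ)..l,
          iteratedDerivWithin 3 (fun x => f x t) (Set.Icc 0 l) x *
            Real.cos (π * ((k:ℝ)+1) / l * x)| with hS_def
    have hSnn : 0 ≤ S := Finset.sum_nonneg (fun k _ =>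
      mul_nonneg (by positivity) (abs_nonneg _))
    have hS2 : S^2 ≤ l^2/6 * B := by
      calc S^2 ≤ (∑ k ∈ Finset.range n, (1/(π * ((k:ℝ)+1) / l)) ^ 2) *
            ∑ k ∈ Finset.range n, |Real.sqrt (2/l) * ∫ x in (0:ℝ)..l,
              iteratedDerivWithin 3 (fun x => f x t) (Set.Icc 0 l) x *
                Real.cos (π * ((k:ℝ)+1) / l * x)| ^ 2 := hCS
        _ ≤ l^2/6 * B := by
            apply mul_le_mul hlamsum hbessel'
              (Finset.sum_nonneg (fun k _ => sq_nonneg _)) (by positivity)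
    have hfinal : S ≤ Real.sqrt (l^2/6 * B) :=
      (Real.le_sqrt hSnn (by positivity)).2 hS2
    have hsqrt_eq : Real.sqrt (l^2/6 * B) = l / Real.sqrt 6 * Real.sqrt B := by
      rw [Real.sqrt_mul (by positivity) B, Real.sqrt_div (sq_nonneg l) 6,
        Real.sqrt_sq hl.le]
    rw [hsqrt_eq] at hfinal
    exact hfinal
  -- bound √B by the sup
  have hsup : Real.sqrt B ≤ sSup ((fun s => Real.sqrt (∫ x in (0:ℝ)..l,
      (iteratedDerivWithin 3 (fun y => f y s) (Set.Icc 0 l) x) ^ 2)) '' Set.Icc 0 T) := by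
    have hK : IsCompact (Set.Icc (0:ℝ) l ×ˢ Set.Icc (0:ℝ) T) :=
      isCompact_Icc.prod isCompact_Icc
    obtain ⟨M, hM⟩ := hK.exists_bound_of_continuousOn hf3c
    have hbdd : BddAbove ((fun s => Real.sqrt (∫ x in (0:ℝ)..l,
        (iteratedDerivWithin 3 (fun y => f y s) (Set.Icc 0 l) x) ^ 2)) '' Set.Icc 0 T) := by
      refine ⟨Real.sqrt (l * M^2), ?_⟩
      rintro y ⟨s, hs, rfl⟩
      apply Real.sqrt_le_sqrt
      have hint1 : IntervalIntegrable (fun x =>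
          (iteratedDerivWithin 3 (fun y => f y s) (Set.Icc 0 l) x) ^ 2) volume 0 l := by
        apply ContinuousOn.intervalIntegrable
        rw [Set.uIcc_of_le hl.le]
        exact ((hfx s hs).continuousOn_iteratedDerivWithin (le_refl _)
          (uniqueDiffOn_Icc hl)).pow 2
      have hint2 : IntervalIntegrable (fun _ : ℝ => M^2) volume 0 l :=
        intervalIntegrable_const
      calc (∫ x in (0:ℝ)..l, (iteratedDerivWithin 3 (fun y => f y s) (Set.Icc 0 l) x) ^ 2)
          ≤ ∫ x in (0:ℝ)..l, M^2 := by
            apply intervalIntegral.integral_mono_on hl.le hint1 hint2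
            intro x hx
            have hmem : (x, s) ∈ Set.Icc (0:ℝ) l ×ˢ Set.Icc (0:ℝ) T := ⟨hx, hs⟩
            have := hM (x, s) hmem
            have habs : |iteratedDerivWithin 3 (fun y => f y s) (Set.Icc 0 l) x| ≤ M := this
            have h1 := abs_le.1 habs
            nlinarith [h1.1, h1.2]
        _ = l * M^2 := by
            rw [intervalIntegral.integral_const]
            simp
    apply le_csSup hbdd
    exact ⟨t, ht, rfl⟩
  have hcoef : (0:ℝ) ≤ l / Real.sqrt 6 := by positivity
  have bound : ∀ n : ℕ, ∑ k ∈ Finset.range n, (π * ((k:ℝ)+1) / l) ^ 2 *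
        |Real.sqrt (2/l) * ∫ x in (0:ℝ)..l, f x t * Real.sin (π * ((k:ℝ)+1) / l * x)|
      ≤ l / Real.sqrt 6 * sSup ((fun s => Real.sqrt (∫ x in (0:ℝ)..l,
          (iteratedDerivWithin 3 (fun y => f y s) (Set.Icc 0 l) x) ^ 2)) '' Set.Icc 0 T) :=
    fun n => le_trans (partial_bound n) (mul_le_mul_of_nonneg_left hsup hcoef)
  have hnn : ∀ k : ℕ, 0 ≤ (π * ((k:ℝ)+1) / l) ^ 2 *
      |Real.sqrt (2/l) * ∫ x in (0:ℝ)..l, f x t * Real.sin (π * ((k:ℝ)+1) / l * x)| :=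
    fun k => mul_nonneg (sq_nonneg _) (abs_nonneg _)
  exact ⟨summable_of_sum_range_le hnn bound, Real.tsum_le_of_sum_range_le hnn bound⟩
end

section
/- Let l > 0 and let φ : [0,l] → ℝ be continuously differentiable with φ(0) = φ(l) = 0. Then ∑_{k=1}^∞ |φ_k| ≤ (l/√6) (∫₀^l |φ'(x)|² dx)^{1/2}. -/
set_option maxHeartbeats 1000000

open Real Set MeasureTheory intervalIntegral
open Topology


lemma myint_cos (c : ℝ) (hc : c ≠ 0) (l : ℝ) :
    ∫ x in (0:ℝ)..l, Real.cos (c * x) = Real.sin (c * l) / c := by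
  rw [intervalIntegral.integral_comp_mul_left (fun x => Real.cos x) hc]
  simp [integral_cos, div_eq_inv_mul]

lemma myint_cos_zero (l : ℝ) (hl : 0 < l) (r : ℝ) (m : ℤ) (hm : m ≠ 0) (hr : (m : ℝ) = r) :
    ∫ x in (0:ℝ)..l, Real.cos (π * r / l * x) = 0 := by
  subst hr
  have hc : π * (m : ℝ) / l ≠ 0 :=
    div_ne_zero (mul_ne_zero Real.pi_ne_zero (Int.cast_ne_zero.2 hm)) hl.ne'
  rw [myint_cos _ hc]
  have h1 : π * (m : ℝ) / l * l = (m : ℝ) * π := by field_simp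
  rw [h1, Real.sin_int_mul_pi, zero_div]

lemma myorth (l : ℝ) (hl : 0 < l) (j k : ℕ) :
    ∫ x in (0:ℝ)..l,
        Real.cos (π * ((j : ℝ) + 1) / l * x) * Real.cos (π * ((k : ℝ) + 1) / l * x)
      = if j = k then l / 2 else 0 := by
  have key : ∀ x : ℝ, Real.cos (π * ((j : ℝ) + 1) / l * x) * Real.cos (π * ((k : ℝ) + 1) / l * x)
      = (Real.cos (π * ((j : ℝ) - (k : ℝ)) / l * x)
          + Real.cos (π * ((j : ℝ) + (k : ℝ) + 2) / l * x)) / 2 := by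
    intro x
    have h1 : π * ((j : ℝ) - (k : ℝ)) / l * x
        = π * ((j : ℝ) + 1) / l * x - π * ((k : ℝ) + 1) / l * x := by ring
    have h2 : π * ((j : ℝ) + (k : ℝ) + 2) / l * x
        = π * ((j : ℝ) + 1) / l * x + π * ((k : ℝ) + 1) / l * x := by ring
    rw [h1, h2, Real.cos_sub, Real.cos_add]; ring
  simp only [key]
  have hi1 : IntervalIntegrable (fun x => Real.cos (π * ((j : ℝ) - (k : ℝ)) / l * x)) volume 0 l :=
    (Real.continuous_cos.comp (continuous_const.mul continuous_id)).intervalIntegrable 0 l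
  have hi2 : IntervalIntegrable (fun x => Real.cos (π * ((j : ℝ) + (k : ℝ) + 2) / l * x)) volume 0 l :=
    (Real.continuous_cos.comp (continuous_const.mul continuous_id)).intervalIntegrable 0 l
  rw [intervalIntegral.integral_div, intervalIntegral.integral_add hi1 hi2]
  have h2z : (∫ x in (0:ℝ)..l, Real.cos (π * ((j : ℝ) + (k : ℝ) + 2) / l * x)) = 0 := by
    refine myint_cos_zero l hl _ ((j : ℤ) + k + 2) (by omega) (by push_cast; ring)
  rw [h2z]
  by_cases h : j = k
  · subst h
    have : ∀ x : ℝ, Real.cos (π * ((j : ℝ) - (j : ℝ)) / l * x) = 1 := by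
      intro x; simp
    simp only [this]
    simp
  · have h1z : (∫ x in (0:ℝ)..l, Real.cos (π * ((j : ℝ) - (k : ℝ)) / l * x)) = 0 := by
      refine myint_cos_zero l hl _ ((j : ℤ) - k) (by omega) (by push_cast; ring)
    rw [h1z]
    simp [h]

lemma mybessel (l : ℝ) (hl : 0 < l) (g : ℝ → ℝ) (hg : ContinuousOn g (Set.Icc 0 l)) (N : ℕ) :
    ∑ k ∈ Finset.range N,
        (2 / l) * (∫ x in (0:ℝ)..l, g x * Real.cos (π * ((k : ℝ) + 1) / l * x)) ^ 2
      ≤ ∫ x in (0:ℝ)..l, g x ^ 2 := by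
  set a : ℕ → ℝ := fun k => ∫ x in (0:ℝ)..l, g x * Real.cos (π * ((k : ℝ) + 1) / l * x) with ha
  set S : ℝ → ℝ :=
    fun x => ∑ k ∈ Finset.range N, (2 / l) * a k * Real.cos (π * ((k : ℝ) + 1) / l * x) with hS
  have hIcc : Set.uIcc (0 : ℝ) l = Set.Icc 0 l := Set.uIcc_of_le hl.le
  have hcosc : ∀ k : ℕ, Continuous fun x : ℝ => Real.cos (π * ((k : ℝ) + 1) / l * x) :=
    fun k => Real.continuous_cos.comp (continuous_const.mul continuous_id)
  have hgon : ContinuousOn g (Set.uIcc 0 l) := hIcc ▸ hg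
  have hSc : Continuous S := by
    apply continuous_finset_sum
    intro k _
    exact continuous_const.mul (hcosc k)
  have hgi : IntervalIntegrable g volume 0 l := hgon.intervalIntegrable
  have hgcosi : ∀ k : ℕ,
      IntervalIntegrable (fun x => g x * Real.cos (π * ((k : ℝ) + 1) / l * x)) volume 0 l :=
    fun k => (hgon.mul (hcosc k).continuousOn).intervalIntegrable
  have hg2i : IntervalIntegrable (fun x => g x ^ 2) volume 0 l :=
    (hgon.pow 2).intervalIntegrable
  have hgSi : IntervalIntegrable (fun x => g x * S x) volume 0 l :=
    (hgon.mul hSc.continuousOn).intervalIntegrable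
  have hS2i : IntervalIntegrable (fun x => S x ^ 2) volume 0 l :=
    ((hSc.pow 2).continuousOn).intervalIntegrable
  -- cross term
  have hgS : (∫ x in (0:ℝ)..l, g x * S x) = ∑ k ∈ Finset.range N, (2 / l) * a k ^ 2 := by
    have e1 : ∀ x : ℝ, g x * S x
        = ∑ k ∈ Finset.range N,
            (2 / l) * a k * (g x * Real.cos (π * ((k : ℝ) + 1) / l * x)) := by
      intro x
      rw [hS]
      rw [Finset.mul_sum]
      exact Finset.sum_congr rfl fun k _ => by ring
    simp only [e1]
    rw [intervalIntegral.integral_finset_sum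
      (fun k _ => (hgcosi k).const_mul ((2 : ℝ) / l * a k))]
    refine Finset.sum_congr rfl fun k _ => ?_
    rw [intervalIntegral.integral_const_mul]
    rw [show (∫ x in (0:ℝ)..l, g x * Real.cos (π * ((k : ℝ) + 1) / l * x)) = a k from rfl]
    ring
  -- square term
  have hSS : (∫ x in (0:ℝ)..l, S x ^ 2) = ∑ k ∈ Finset.range N, (2 / l) * a k ^ 2 := by
    have e2 : ∀ x : ℝ, S x ^ 2
        = ∑ j ∈ Finset.range N, ∑ k ∈ Finset.range N,
            ((2 / l) * a j * ((2 / l) * a k)) *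
              (Real.cos (π * ((j : ℝ) + 1) / l * x) * Real.cos (π * ((k : ℝ) + 1) / l * x)) := by
      intro x
      rw [hS, sq, Finset.sum_mul_sum]
      exact Finset.sum_congr rfl fun j _ => Finset.sum_congr rfl fun k _ => by ring
    simp only [e2]
    have hii : ∀ j ∈ Finset.range N, IntervalIntegrable (fun x =>
        ∑ k ∈ Finset.range N, ((2 / l) * a j * ((2 / l) * a k)) *
          (Real.cos (π * ((j : ℝ) + 1) / l * x) * Real.cos (π * ((k : ℝ) + 1) / l * x)))
        volume 0 l := by
      intro j _
      exact (continuous_finset_sum _ (fun k _ =>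
        continuous_const.mul ((hcosc j).mul (hcosc k)))).intervalIntegrable 0 l
    rw [intervalIntegral.integral_finset_sum hii]
    have : ∀ j ∈ Finset.range N,
        (∫ x in (0:ℝ)..l, ∑ k ∈ Finset.range N,
            ((2 / l) * a j * ((2 / l) * a k)) *
              (Real.cos (π * ((j : ℝ) + 1) / l * x) * Real.cos (π * ((k : ℝ) + 1) / l * x)))
          = (2 / l) * a j ^ 2 := by
      intro j hj
      rw [intervalIntegral.integral_finset_sum (f := fun k x => ((2 / l) * a j * ((2 / l) * a k)) *
            (Real.cos (π * ((j : ℝ) + 1) / l * x) * Real.cos (π * ((k : ℝ) + 1) / l * x)))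
        (fun k _ => ((continuous_const.mul ((hcosc j).mul (hcosc k))).intervalIntegrable 0 l :
          IntervalIntegrable (fun x => ((2 / l) * a j * ((2 / l) * a k)) *
            (Real.cos (π * ((j : ℝ) + 1) / l * x) * Real.cos (π * ((k : ℝ) + 1) / l * x))) volume 0 l))]
      have e3 : ∀ k ∈ Finset.range N,
          (∫ x in (0:ℝ)..l,
              ((2 / l) * a j * ((2 / l) * a k)) *
                (Real.cos (π * ((j : ℝ) + 1) / l * x) * Real.cos (π * ((k : ℝ) + 1) / l * x)))
            = if j = k then (2 / l) * a j * ((2 / l) * a k) * (l / 2) else 0 := by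
        intro k _
        rw [intervalIntegral.integral_const_mul, myorth l hl j k]
        by_cases h : j = k <;> simp [h]
      rw [Finset.sum_congr rfl e3, Finset.sum_ite_eq (Finset.range N) j
        (fun k => (2 / l) * a j * ((2 / l) * a k) * (l / 2)), if_pos hj]
      field_simp
    rw [Finset.sum_congr rfl this]
  -- nonnegativity
  have hpos : (0 : ℝ) ≤ ∫ x in (0:ℝ)..l, (g x - S x) ^ 2 :=
    intervalIntegral.integral_nonneg hl.le fun x _ => sq_nonneg _
  have e4 : ∀ x : ℝ, (g x - S x) ^ 2 = g x ^ 2 - 2 * (g x * S x) + S x ^ 2 := fun x => by ring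
  rw [intervalIntegral.integral_congr (g := fun x => g x ^ 2 - 2 * (g x * S x) + S x ^ 2)
    (fun x _ => e4 x)] at hpos
  rw [intervalIntegral.integral_add (hg2i.sub (hgSi.const_mul 2)) hS2i,
    intervalIntegral.integral_sub hg2i (hgSi.const_mul 2),
    intervalIntegral.integral_const_mul, hgS, hSS] at hpos
  linarith

lemma myibp (l : ℝ) (hl : 0 < l) (φ : ℝ → ℝ) (hφ : ContDiffOn ℝ 1 φ (Set.Icc 0 l))
    (h0 : φ 0 = 0) (hle : φ l = 0) (c : ℝ) (hc : 0 < c) :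
    ∫ x in (0:ℝ)..l, φ x * Real.sin (c * x)
      = (1 / c) * ∫ x in (0:ℝ)..l, derivWithin φ (Set.Icc 0 l) x * Real.cos (c * x) := by
  set g := derivWithin φ (Set.Icc 0 l) with hgdef
  have hIcc : Set.uIcc (0 : ℝ) l = Set.Icc 0 l := Set.uIcc_of_le hl.le
  have hφc : ContinuousOn φ (Set.Icc 0 l) := hφ.continuousOn
  have hgc : ContinuousOn g (Set.Icc 0 l) :=
    hφ.continuousOn_derivWithin (uniqueDiffOn_Icc hl) le_rfl
  have hd : ∀ x ∈ Set.Ioo (0:ℝ) l, HasDerivAt φ (g x) x := by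
    intro x hx
    have hmem : Set.Icc (0:ℝ) l ∈ 𝓝 x := Icc_mem_nhds hx.1 hx.2
    have hdiff : DifferentiableAt ℝ φ x :=
      ((hφ.differentiableOn one_ne_zero) x (Set.Ioo_subset_Icc_self hx)).differentiableAt hmem
    have hgx : g x = deriv φ x := derivWithin_of_mem_nhds hmem
    rw [hgx]
    exact hdiff.hasDerivAt
  set F : ℝ → ℝ := fun x => -(φ x * Real.cos (c * x)) / c with hF
  have hFd : ∀ x ∈ Set.Ioo (0:ℝ) l,
      HasDerivAt F (φ x * Real.sin (c * x) - (1 / c) * (g x * Real.cos (c * x))) x := by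
    intro x hx
    have h1 : HasDerivAt (fun y : ℝ => Real.cos (c * y)) (-Real.sin (c * x) * c) x :=
      by simpa using ((hasDerivAt_id x).const_mul c).cos
    have h2 := (((hd x hx).mul h1).div_const c).neg
    have hcne : c ≠ 0 := hc.ne'
    have hrw : -((g x * Real.cos (c * x) + φ x * (-Real.sin (c * x) * c)) / c)
        = φ x * Real.sin (c * x) * (c / c) - 1 / c * (g x * Real.cos (c * x)) := by ring
    rw [hrw, div_self hcne, mul_one] at h2
    have hF' : F = -fun x => (φ * fun y => Real.cos (c * y)) x / c := by
      funext y; rw [hF]; exact neg_div c (φ y * Real.cos (c * y))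
    rw [hF']; exact h2
  have hcont : ContinuousOn F (Set.Icc 0 l) :=
    ((hφc.mul (Real.continuous_cos.comp (continuous_const.mul continuous_id)).continuousOn).neg).div_const c
  have hint1 : IntervalIntegrable (fun x => φ x * Real.sin (c * x)) volume 0 l :=
    ((hIcc ▸ hφc).mul
      (Real.continuous_sin.comp (continuous_const.mul continuous_id)).continuousOn).intervalIntegrable
  have hint2 : IntervalIntegrable (fun x => g x * Real.cos (c * x)) volume 0 l :=
    ((hIcc ▸ hgc).mul
      (Real.continuous_cos.comp (continuous_const.mul continuous_id)).continuousOn).intervalIntegrable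
  have hint : IntervalIntegrable
      (fun x => φ x * Real.sin (c * x) - (1 / c) * (g x * Real.cos (c * x))) volume 0 l :=
    hint1.sub (hint2.const_mul (1 / c))
  have hftc := intervalIntegral.integral_eq_sub_of_hasDeriv_right_of_le hl.le hcont
    (fun x hx => (hFd x hx).hasDerivWithinAt) hint
  rw [show F l = 0 by simp [hF, hle], show F 0 = 0 by simp [hF, h0], sub_zero] at hftc
  rw [intervalIntegral.integral_sub hint1 (hint2.const_mul (1 / c)),
    intervalIntegral.integral_const_mul] at hftc
  linarith

/-- Lemma 3.8 (second estimate): if `φ` is continuously differentiable on `[0,l]`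
with `φ(0) = φ(l) = 0`, then `∑_{k=1}^∞ |φ_k| ≤ (l/√6) ‖φ'‖_{L²(0,l)}`, where
`φ_k = √(2/l) ∫₀^l φ(x) sin(πkx/l) dx`. -/
theorem fourier_coeff_abs_sum_estimate (l : ℝ) (hl : 0 < l) (φ : ℝ → ℝ)
    (hφ : ContDiffOn ℝ 1 φ (Set.Icc 0 l)) (h0 : φ 0 = 0) (hle : φ l = 0) :
    Summable (fun k : ℕ =>
      |Real.sqrt (2 / l) * ∫ x in (0:ℝ)..l, φ x * Real.sin (π * ((k : ℝ) + 1) / l * x)|) ∧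
    (∑' k : ℕ,
        |Real.sqrt (2 / l) * ∫ x in (0:ℝ)..l, φ x * Real.sin (π * ((k : ℝ) + 1) / l * x)|)
      ≤ l / Real.sqrt 6 *
        Real.sqrt (∫ x in (0:ℝ)..l, (derivWithin φ (Set.Icc 0 l) x) ^ 2) := by
  have hgc : ContinuousOn (derivWithin φ (Set.Icc 0 l)) (Set.Icc 0 l) :=
    hφ.continuousOn_derivWithin (uniqueDiffOn_Icc hl) le_rfl
  set g : ℝ → ℝ := derivWithin φ (Set.Icc 0 l) with hgdef
  set E : ℝ := ∫ x in (0:ℝ)..l, g x ^ 2 with hE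
  have hE0 : 0 ≤ E := intervalIntegral.integral_nonneg hl.le fun x _ => sq_nonneg _
  set a : ℕ → ℝ := fun k => ∫ x in (0:ℝ)..l, g x * Real.cos (π * ((k : ℝ) + 1) / l * x) with ha
  set P : ℕ → ℝ := fun k =>
    |Real.sqrt (2 / l) * ∫ x in (0:ℝ)..l, φ x * Real.sin (π * ((k : ℝ) + 1) / l * x)| with hP
  have habs : ∀ k : ℕ, P k = (l / (π * ((k : ℝ) + 1))) * (Real.sqrt (2 / l) * |a k|) := by
    intro k
    have hc : 0 < π * ((k : ℝ) + 1) / l := by positivity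
    simp only [hP]
    rw [myibp l hl φ hφ h0 hle _ hc]
    rw [show (∫ x in (0:ℝ)..l, derivWithin φ (Set.Icc 0 l) x
        * Real.cos (π * ((k : ℝ) + 1) / l * x)) = a k from rfl]
    rw [abs_mul, abs_mul, abs_of_nonneg (Real.sqrt_nonneg _),
      abs_of_nonneg (le_of_lt (by positivity : (0:ℝ) < 1 / (π * ((k : ℝ) + 1) / l)))]
    rw [one_div_div]
    ring
  have hbound : ∀ N : ℕ, ∑ k ∈ Finset.range N, P k ≤ l / Real.sqrt 6 * Real.sqrt E := by
    intro N
    have hsum_eq : ∑ k ∈ Finset.range N, P k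
        = ∑ k ∈ Finset.range N, (l / (π * ((k : ℝ) + 1))) * (Real.sqrt (2 / l) * |a k|) :=
      Finset.sum_congr rfl fun k _ => habs k
    have hcs := Finset.sum_mul_sq_le_sq_mul_sq (Finset.range N)
      (fun k => l / (π * ((k : ℝ) + 1))) (fun k => Real.sqrt (2 / l) * |a k|)
    have hA : ∑ k ∈ Finset.range N, (l / (π * ((k : ℝ) + 1))) ^ 2 ≤ l ^ 2 / 6 := by
      have e1 : ∀ k : ℕ, (l / (π * ((k : ℝ) + 1))) ^ 2
          = (l ^ 2 / π ^ 2) * ((1 : ℝ) / ((k : ℝ) + 1) ^ 2) := by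
        intro k
        have : ((k : ℝ) + 1) ≠ 0 := by positivity
        field_simp
      rw [Finset.sum_congr rfl fun k _ => e1 k, ← Finset.mul_sum]
      have h2 : ∑ k ∈ Finset.range N, (1 : ℝ) / ((k : ℝ) + 1) ^ 2 ≤ π ^ 2 / 6 := by
        have h3 : ∑ k ∈ Finset.range N, (1 : ℝ) / ((k : ℝ) + 1) ^ 2
            = ∑ n ∈ Finset.range (N + 1), (1 : ℝ) / (n : ℝ) ^ 2 := by
          rw [Finset.sum_range_succ']
          push_cast
          simp
        rw [h3]
        exact sum_le_hasSum (Finset.range (N + 1)) (fun n _ => by positivity) hasSum_zeta_two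
      calc l ^ 2 / π ^ 2 * ∑ k ∈ Finset.range N, (1 : ℝ) / ((k : ℝ) + 1) ^ 2
          ≤ l ^ 2 / π ^ 2 * (π ^ 2 / 6) := by
            apply mul_le_mul_of_nonneg_left h2 (by positivity)
        _ = l ^ 2 / 6 := by
            field_simp
    have hB : ∑ k ∈ Finset.range N, (Real.sqrt (2 / l) * |a k|) ^ 2 ≤ E := by
      have e2 : ∀ k : ℕ, (Real.sqrt (2 / l) * |a k|) ^ 2 = (2 / l) * a k ^ 2 := by
        intro k
        rw [mul_pow, Real.sq_sqrt (by positivity : (0:ℝ) ≤ 2 / l), sq_abs]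
      rw [Finset.sum_congr rfl fun k _ => e2 k]
      exact mybessel l hl g hgc N
    have hs0 : 0 ≤ ∑ k ∈ Finset.range N, (l / (π * ((k : ℝ) + 1))) * (Real.sqrt (2 / l) * |a k|) :=
      Finset.sum_nonneg fun k _ =>
        mul_nonneg (by positivity) (mul_nonneg (Real.sqrt_nonneg _) (abs_nonneg _))
    have hsq : (∑ k ∈ Finset.range N, (l / (π * ((k : ℝ) + 1))) * (Real.sqrt (2 / l) * |a k|)) ^ 2
        ≤ l ^ 2 / 6 * E := by
      refine hcs.trans ?_
      exact mul_le_mul hA hB (Finset.sum_nonneg fun k _ => sq_nonneg _) (by positivity)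
    have hfin : ∑ k ∈ Finset.range N, (l / (π * ((k : ℝ) + 1))) * (Real.sqrt (2 / l) * |a k|)
        ≤ Real.sqrt (l ^ 2 / 6 * E) := (Real.le_sqrt hs0 (by positivity)).2 hsq
    rw [hsum_eq]
    refine hfin.trans (le_of_eq ?_)
    rw [Real.sqrt_mul (by positivity : (0:ℝ) ≤ l ^ 2 / 6) E,
      Real.sqrt_div (sq_nonneg l) 6, Real.sqrt_sq hl.le]
  have hnn : ∀ k : ℕ, 0 ≤ P k := fun k => abs_nonneg _
  exact ⟨summable_of_sum_range_le hnn hbound, Real.tsum_le_of_sum_range_le hnn hbound⟩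
end

section
/- Let l > 0, T > 0. (a) If f : [0,l] × [0,T] → ℝ is continuous, four times continuously differentiable in x with ∂⁴f/∂x⁴ continuous on [0,l]×[0,T], and f(0,t) = f(l,t) = ∂²f/∂x²(0,t) = ∂²f/∂x²(l,t) = 0 for all t, then for every t ∈ [0,T]: ∑_{k=1}^∞ λ_k³ |f_k(t)| ≤ (l/√6) (∫₀^l |∂⁴f/∂x⁴(x,t)|² dx)^{1/2}. (b) If φ : [0,l] → ℝ is four times continuously differentiable with φ(0) = φ(l) = φ''(0) = φ''(l) = 0, then ∑_{k=1}^∞ λ_k³ |φ_k| ≤ (l/√6) (∫₀^l |φ⁗(x)|² dx)^{1/2}. -/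
open Real Set MeasureTheory intervalIntegral

namespace FourierCubedAux

lemma integral_cos_mul {m : ℝ} (hm : m ≠ 0) (a b : ℝ) :
    ∫ x in a..b, Real.cos (m * x) = (Real.sin (m * b) - Real.sin (m * a)) / m := by
  have h : ∀ x ∈ uIcc a b, HasDerivAt (fun y => Real.sin (m * y) / m) (Real.cos (m * x)) x := by
    intro x _
    have h1 : HasDerivAt (fun y : ℝ => m * y) m x := by
      simpa using (hasDerivAt_id x).const_mul m
    have h2 := (Real.hasDerivAt_sin (m * x)).comp x h1
    have h3 := h2.div_const m
    simpa [mul_div_assoc, div_self hm] using h3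
  rw [intervalIntegral.integral_eq_sub_of_hasDerivAt h
    ((Real.continuous_cos.comp (continuous_const.mul continuous_id)).intervalIntegrable a b)]
  ring

lemma sin_orth {l : ℝ} (hl : 0 < l) (j k : ℕ) :
    (∫ x in (0:ℝ)..l, Real.sin (π * ((j : ℝ) + 1) / l * x) * Real.sin (π * ((k : ℝ) + 1) / l * x))
      = if j = k then l / 2 else 0 := by
  have hπ := Real.pi_pos
  set a : ℝ := π * ((j : ℝ) + 1) / l with ha_def
  set b : ℝ := π * ((k : ℝ) + 1) / l with hb_def
  have ha : 0 < a := by positivity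
  have hb : 0 < b := by positivity
  have hab : a + b ≠ 0 := by positivity
  have hal : a * l = ((j : ℝ) + 1) * π := by rw [ha_def, div_mul_cancel₀ _ hl.ne']; ring
  have hbl : b * l = ((k : ℝ) + 1) * π := by rw [hb_def, div_mul_cancel₀ _ hl.ne']; ring
  have hid : ∀ x : ℝ, Real.sin (a * x) * Real.sin (b * x)
      = (Real.cos ((a - b) * x) - Real.cos ((a + b) * x)) / 2 := by
    intro x
    have := Real.two_mul_sin_mul_sin (a * x) (b * x)
    have h1 : a * x - b * x = (a - b) * x := by ring
    have h2 : a * x + b * x = (a + b) * x := by ring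
    rw [h1, h2] at this
    linarith
  have hrw : (∫ x in (0:ℝ)..l, Real.sin (a * x) * Real.sin (b * x))
      = (∫ x in (0:ℝ)..l, (Real.cos ((a - b) * x) - Real.cos ((a + b) * x)) / 2) :=
    intervalIntegral.integral_congr (fun x _ => hid x)
  have hint1 : IntervalIntegrable (fun x => Real.cos ((a - b) * x)) volume 0 l :=
    (Real.continuous_cos.comp (continuous_const.mul continuous_id)).intervalIntegrable 0 l
  have hint2 : IntervalIntegrable (fun x => Real.cos ((a + b) * x)) volume 0 l :=
    (Real.continuous_cos.comp (continuous_const.mul continuous_id)).intervalIntegrable 0 l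
  have habl : Real.sin ((a + b) * l) = 0 := by
    have : (a + b) * l = ((j + k + 2 : ℕ) : ℝ) * π := by
      rw [add_mul, hal, hbl]; push_cast; ring
    rw [this, Real.sin_nat_mul_pi]
  have hsplit : (∫ x in (0:ℝ)..l, (Real.cos ((a - b) * x) - Real.cos ((a + b) * x)) / 2)
      = ((∫ x in (0:ℝ)..l, Real.cos ((a - b) * x))
          - ∫ x in (0:ℝ)..l, Real.cos ((a + b) * x)) / 2 := by
    rw [intervalIntegral.integral_div, intervalIntegral.integral_sub hint1 hint2]
  by_cases hjk : j = k
  · subst hjk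
    have hba : a - b = 0 := by rw [ha_def, hb_def]; ring
    have h1 : (∫ x in (0:ℝ)..l, Real.cos ((a - b) * x)) = l := by
      simp [hba]
    have h2 : (∫ x in (0:ℝ)..l, Real.cos ((a + b) * x)) = 0 := by
      rw [integral_cos_mul hab, habl]
      simp
    rw [hrw, hsplit, h1, h2]
    simp
  · have hba : a - b ≠ 0 := by
      have hjk' : (j : ℝ) ≠ (k : ℝ) := by
        exact_mod_cast hjk
      have hrw2 : a - b = π / l * ((j : ℝ) - (k : ℝ)) := by
        rw [ha_def, hb_def]; field_simp; ring
      rw [hrw2]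
      exact mul_ne_zero (ne_of_gt (by positivity)) (sub_ne_zero.mpr hjk')
    have hsl : Real.sin ((a - b) * l) = 0 := by
      have : (a - b) * l = ((j : ℤ) - (k : ℤ) : ℤ) * π := by
        rw [sub_mul, hal, hbl]; push_cast; ring
      rw [this, Real.sin_int_mul_pi]
    have h1 : (∫ x in (0:ℝ)..l, Real.cos ((a - b) * x)) = 0 := by
      rw [integral_cos_mul hba, hsl]
      simp
    have h2 : (∫ x in (0:ℝ)..l, Real.cos ((a + b) * x)) = 0 := by
      rw [integral_cos_mul hab, habl]
      simp
    rw [hrw, hsplit, h1, h2]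
    simp [hjk]

/-- Integration by parts twice against `sin (c x)`. -/
lemma ibp_two {l : ℝ} (hl : 0 < l) {c : ℝ} (hc : 0 < c) (hsl : Real.sin (c * l) = 0)
    (h h' h'' : ℝ → ℝ)
    (hd : ∀ x ∈ Icc (0:ℝ) l, HasDerivWithinAt h (h' x) (Icc 0 l) x)
    (hd' : ∀ x ∈ Icc (0:ℝ) l, HasDerivWithinAt h' (h'' x) (Icc 0 l) x)
    (hcont'' : ContinuousOn h'' (Icc 0 l))
    (h0 : h 0 = 0) (hL : h l = 0) :
    ∫ x in (0:ℝ)..l, h x * Real.sin (c * x)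
      = -(1 / c ^ 2) * ∫ x in (0:ℝ)..l, h'' x * Real.sin (c * x) := by
  have hcc : c ≠ 0 := ne_of_gt hc
  have huIcc : uIcc (0:ℝ) l = Icc 0 l := uIcc_of_le hl.le
  have hcont' : ContinuousOn h' (Icc 0 l) :=
    fun x hx => (hd' x hx).continuousWithinAt
  -- step 1 : ∫ h sin(cx) = (1/c) ∫ h' cos(cx)
  have hv1 : ∀ x ∈ uIcc (0:ℝ) l,
      HasDerivWithinAt (fun y => -(1 / c) * Real.cos (c * y)) (Real.sin (c * x)) (uIcc 0 l) x := by
    intro x _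
    have h1 : HasDerivAt (fun y : ℝ => c * y) c x := by
      simpa using (hasDerivAt_id x).const_mul c
    have h2 := ((Real.hasDerivAt_cos (c * x)).comp x h1).const_mul (-(1 / c))
    have h3 : -(1 / c) * (-Real.sin (c * x) * c) = Real.sin (c * x) := by
      field_simp
    rw [h3] at h2
    exact h2.hasDerivWithinAt
  have hu1 : ∀ x ∈ uIcc (0:ℝ) l, HasDerivWithinAt h (h' x) (uIcc 0 l) x := by
    rw [huIcc]; exact hd
  have hint1 : IntervalIntegrable h' volume 0 l := by
    apply ContinuousOn.intervalIntegrable; rwa [huIcc]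
  have hint2 : IntervalIntegrable (fun x => Real.sin (c * x)) volume 0 l :=
    (Real.continuous_sin.comp (continuous_const.mul continuous_id)).intervalIntegrable 0 l
  have step1 := intervalIntegral.integral_mul_deriv_eq_deriv_mul_of_hasDerivWithinAt
    hu1 hv1 hint1 hint2
  -- step 2: ∫ h' cos(cx) = -(1/c) ∫ h'' sin(cx)
  have hv2 : ∀ x ∈ uIcc (0:ℝ) l,
      HasDerivWithinAt (fun y => (1 / c) * Real.sin (c * y)) (Real.cos (c * x)) (uIcc 0 l) x := by
    intro x _
    have h1 : HasDerivAt (fun y : ℝ => c * y) c x := by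
      simpa using (hasDerivAt_id x).const_mul c
    have h2 := ((Real.hasDerivAt_sin (c * x)).comp x h1).const_mul (1 / c)
    have h3 : (1 / c) * (Real.cos (c * x) * c) = Real.cos (c * x) := by
      field_simp
    rw [h3] at h2
    exact h2.hasDerivWithinAt
  have hu2 : ∀ x ∈ uIcc (0:ℝ) l, HasDerivWithinAt h' (h'' x) (uIcc 0 l) x := by
    rw [huIcc]; exact hd'
  have hint3 : IntervalIntegrable h'' volume 0 l := by
    apply ContinuousOn.intervalIntegrable; rwa [huIcc]
  have hint4 : IntervalIntegrable (fun x => Real.cos (c * x)) volume 0 l :=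
    (Real.continuous_cos.comp (continuous_const.mul continuous_id)).intervalIntegrable 0 l
  have step2 := intervalIntegral.integral_mul_deriv_eq_deriv_mul_of_hasDerivWithinAt
    hu2 hv2 hint3 hint4
  -- rewrite the integrals
  have e1 : (∫ x in (0:ℝ)..l, h x * Real.sin (c * x))
      = (1 / c) * ∫ x in (0:ℝ)..l, h' x * Real.cos (c * x) := by
    rw [step1, h0, hL]
    have : (∫ x in (0:ℝ)..l, h' x * (-(1 / c) * Real.cos (c * x)))
        = ∫ x in (0:ℝ)..l, -(1 / c) * (h' x * Real.cos (c * x)) :=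
      intervalIntegral.integral_congr (fun x _ => by ring)
    rw [this, intervalIntegral.integral_const_mul]
    ring
  have e2 : (∫ x in (0:ℝ)..l, h' x * Real.cos (c * x))
      = -(1 / c) * ∫ x in (0:ℝ)..l, h'' x * Real.sin (c * x) := by
    rw [step2, hsl]
    have : (∫ x in (0:ℝ)..l, h'' x * ((1 / c) * Real.sin (c * x)))
        = ∫ x in (0:ℝ)..l, (1 / c) * (h'' x * Real.sin (c * x)) :=
      intervalIntegral.integral_congr (fun x _ => by ring)
    rw [this, intervalIntegral.integral_const_mul]
    simp
  rw [e1, e2]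
  ring

/-- The core estimate for a single function. -/
lemma core {l : ℝ} (hl : 0 < l) (φ : ℝ → ℝ)
    (hφ : ContDiffOn ℝ 4 φ (Set.Icc 0 l)) (h0 : φ 0 = 0) (hll : φ l = 0)
    (h2 : iteratedDerivWithin 2 φ (Set.Icc 0 l) 0 = 0)
    (h2l : iteratedDerivWithin 2 φ (Set.Icc 0 l) l = 0) :
    Summable (fun k : ℕ => (π * ((k : ℝ) + 1) / l) ^ 3 *
        |Real.sqrt (2 / l) *
          ∫ x in (0:ℝ)..l, φ x * Real.sin (π * ((k : ℝ) + 1) / l * x)|) ∧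
      (∑' k : ℕ, (π * ((k : ℝ) + 1) / l) ^ 3 *
          |Real.sqrt (2 / l) *
            ∫ x in (0:ℝ)..l, φ x * Real.sin (π * ((k : ℝ) + 1) / l * x)|)
        ≤ l / Real.sqrt 6 *
          Real.sqrt (∫ x in (0:ℝ)..l,
            (iteratedDerivWithin 4 φ (Set.Icc 0 l) x) ^ 2) := by
  have hπ := Real.pi_pos
  have hud : UniqueDiffOn ℝ (Icc (0:ℝ) l) := uniqueDiffOn_Icc hl
  set φi : ℕ → ℝ → ℝ := fun i => iteratedDerivWithin i φ (Icc 0 l) with hφi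
  have conti : ∀ i : ℕ, i ≤ 4 → ContinuousOn (φi i) (Icc 0 l) := by
    intro i hi
    exact hφ.continuousOn_iteratedDerivWithin (by exact_mod_cast hi) hud
  have hder : ∀ i : ℕ, i < 4 → ∀ x ∈ Icc (0:ℝ) l,
      HasDerivWithinAt (φi i) (φi (i + 1) x) (Icc 0 l) x := by
    intro i hi x hx
    have hdiff := hφ.differentiableOn_iteratedDerivWithin
      (show (i : WithTop ℕ∞) < 4 by exact_mod_cast hi) hud x hx
    have h := hdiff.hasDerivWithinAt
    have hsucc : φi (i + 1) x = derivWithin (φi i) (Icc 0 l) x :=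
      congrFun iteratedDerivWithin_succ x
    rw [hsucc]
    exact h
  have hφ0 : φi 0 = φ := iteratedDerivWithin_zero
  -- a few abbreviations
  set c : ℕ → ℝ := fun k => π * ((k : ℝ) + 1) / l with hc_def
  have hc : ∀ k, 0 < c k := fun k => by positivity
  have hsl : ∀ k, Real.sin (c k * l) = 0 := by
    intro k
    have : c k * l = ((k + 1 : ℕ) : ℝ) * π := by
      rw [show c k * l = π * ((k : ℝ) + 1) / l * l from rfl, div_mul_cancel₀ _ hl.ne']; push_cast; ring
    rw [this, Real.sin_nat_mul_pi]
  -- the key integration-by-parts identity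
  have key : ∀ k : ℕ, (∫ x in (0:ℝ)..l, φ x * Real.sin (c k * x))
      = (1 / (c k) ^ 4) * ∫ x in (0:ℝ)..l, φi 4 x * Real.sin (c k * x) := by
    intro k
    have e1 := ibp_two hl (hc k) (hsl k) φ (φi 1) (φi 2)
      (by rw [← hφ0]; exact hder 0 (by norm_num)) (hder 1 (by norm_num))
      (conti 2 (by norm_num)) h0 hll
    have e2 := ibp_two hl (hc k) (hsl k) (φi 2) (φi 3) (φi 4)
      (hder 2 (by norm_num)) (hder 3 (by norm_num)) (conti 4 le_rfl) h2 h2l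
    rw [e1, e2]
    have hck : c k ≠ 0 := (hc k).ne'
    generalize (∫ (x : ℝ) in (0:ℝ)..l, φi 4 x * Real.sin (c k * x)) = I
    generalize hgen : c k = cc at hck ⊢
    ring
  -- L² setup
  set μm : Measure ℝ := volume.restrict (Ioc 0 l) with hμm
  haveI : IsFiniteMeasure μm := by
    constructor
    rw [hμm, Measure.restrict_apply_univ, Real.volume_Ioc]
    exact ENNReal.ofReal_lt_top
  have mem2 : ∀ g : ℝ → ℝ, ContinuousOn g (Icc 0 l) → MemLp g 2 μm := by
    intro g hg
    have hmeas : AEStronglyMeasurable g μm :=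
      (hg.mono Ioc_subset_Icc_self).aestronglyMeasurable measurableSet_Ioc
    obtain ⟨C, hC⟩ := isCompact_Icc.exists_bound_of_continuousOn hg
    exact MemLp.of_bound hmeas C
      (by filter_upwards [ae_restrict_mem measurableSet_Ioc] with x hx
          exact hC x (Ioc_subset_Icc_self hx))
  have inner_eq : ∀ (g₁ g₂ : ℝ → ℝ) (hg₁ : MemLp g₁ 2 μm) (hg₂ : MemLp g₂ 2 μm),
      (inner ℝ (hg₁.toLp g₁) (hg₂.toLp g₂) : ℝ) = ∫ x in (0:ℝ)..l, g₁ x * g₂ x := by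
    intro g₁ g₂ hg₁ hg₂
    rw [MeasureTheory.L2.inner_def, intervalIntegral.integral_of_le hl.le]
    refine integral_congr_ae ?_
    filter_upwards [hg₁.coeFn_toLp, hg₂.coeFn_toLp] with x hx1 hx2
    rw [hx1, hx2]
    simp [RCLike.inner_apply]
    ring
  -- orthonormal family
  have meme : ∀ k : ℕ, MemLp (fun x => Real.sqrt (2 / l) * Real.sin (c k * x)) 2 μm :=
    fun k => mem2 _ (continuous_const.mul (Real.continuous_sin.comp
      (continuous_const.mul continuous_id))).continuousOn
  set e : ℕ → Lp ℝ 2 μm := fun k => (meme k).toLp _ with he_def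
  have hON : Orthonormal ℝ e := by
    rw [orthonormal_iff_ite]
    intro j k
    simp only [he_def]
    rw [inner_eq _ _ (meme j) (meme k)]
    have hrw : (∫ x in (0:ℝ)..l,
        (Real.sqrt (2 / l) * Real.sin (c j * x)) * (Real.sqrt (2 / l) * Real.sin (c k * x)))
        = (2 / l) * ∫ x in (0:ℝ)..l, Real.sin (c j * x) * Real.sin (c k * x) := by
      rw [← intervalIntegral.integral_const_mul]
      refine intervalIntegral.integral_congr (fun x _ => ?_)
      have h2l : Real.sqrt (2 / l) * Real.sqrt (2 / l) = 2 / l :=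
        Real.mul_self_sqrt (by positivity)
      calc (Real.sqrt (2 / l) * Real.sin (c j * x)) * (Real.sqrt (2 / l) * Real.sin (c k * x))
          = (Real.sqrt (2 / l) * Real.sqrt (2 / l)) * (Real.sin (c j * x) * Real.sin (c k * x)) :=
            by ring
        _ = (2 / l) * (Real.sin (c j * x) * Real.sin (c k * x)) := by rw [h2l]
    rw [hrw]
    have := sin_orth hl j k
    have hcx : ∀ m : ℕ, (fun x => Real.sin (c m * x)) = fun x => Real.sin (π * ((m : ℝ) + 1) / l * x) := by
      intro m; rfl
    rw [show (∫ x in (0:ℝ)..l, Real.sin (c j * x) * Real.sin (c k * x))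
        = if j = k then l / 2 else 0 from this]
    by_cases hjk : j = k
    · simp only [hjk, if_pos rfl, if_true]
      field_simp
    · simp [hjk]
  -- the L² function for the fourth derivative
  have memG : MemLp (φi 4) 2 μm := mem2 _ (conti 4 le_rfl)
  set G : Lp ℝ 2 μm := memG.toLp _ with hG_def
  set D : ℕ → ℝ := fun k => (inner ℝ (e k) G : ℝ) with hD_def
  have normG_sq : ‖G‖ ^ 2 = ∫ x in (0:ℝ)..l, (φi 4 x) ^ 2 := by
    have h := real_inner_self_eq_norm_sq G
    simp only [hG_def] at h
    rw [inner_eq _ _ memG memG] at h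
    rw [← h]
    exact intervalIntegral.integral_congr (fun x _ => (sq (φi 4 x)) ▸ rfl)
  have bessel : ∀ s : Finset ℕ, (∑ k ∈ s, (D k) ^ 2) ≤ ‖G‖ ^ 2 := by
    intro s
    have := hON.sum_inner_products_le (s := s) G
    simpa [hD_def, Real.norm_eq_abs, sq_abs] using this
  -- relate D k to the integral of the fourth derivative against sin
  have hD : ∀ k, D k = Real.sqrt (2 / l) * ∫ x in (0:ℝ)..l, φi 4 x * Real.sin (c k * x) := by
    intro k
    simp only [hD_def, he_def, hG_def]
    rw [inner_eq _ _ (meme k) memG, ← intervalIntegral.integral_const_mul]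
    exact intervalIntegral.integral_congr (fun x _ => by ring)
  -- the terms of the series
  set a : ℕ → ℝ := fun k => (π * ((k : ℝ) + 1) / l) ^ 3 *
      |Real.sqrt (2 / l) * ∫ x in (0:ℝ)..l, φ x * Real.sin (π * ((k : ℝ) + 1) / l * x)| with ha_def
  have ha : ∀ k, a k = (1 / c k) * |D k| := by
    intro k
    have hint : (∫ x in (0:ℝ)..l, φ x * Real.sin (π * ((k : ℝ) + 1) / l * x))
        = (∫ x in (0:ℝ)..l, φ x * Real.sin (c k * x)) := rfl
    rw [ha_def]
    simp only
    rw [hint, key k, hD k]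
    rw [show (π * ((k : ℝ) + 1) / l) = c k from rfl]
    rw [abs_mul, abs_mul, abs_mul]
    rw [abs_of_nonneg (Real.sqrt_nonneg _), abs_of_nonneg (by positivity : (0:ℝ) ≤ 1 / (c k) ^ 4)]
    have hck := (hc k).ne'
    field_simp
  have ha_nonneg : ∀ k, 0 ≤ a k := by
    intro k
    rw [ha k]
    positivity
  -- bound on partial sums of 1/c²
  have hcsum : ∀ s : Finset ℕ, (∑ k ∈ s, (1 / c k) ^ 2) ≤ l ^ 2 / 6 := by
    intro s
    have h1 : ∀ k ∈ s, (1 / c k) ^ 2 = (l ^ 2 / π ^ 2) * (1 / ((k : ℝ) + 1) ^ 2) := by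
      intro k _
      rw [hc_def]
      have : ((k : ℝ) + 1) ≠ 0 := by positivity
      field_simp
    rw [Finset.sum_congr rfl h1, ← Finset.mul_sum]
    have h2 : (∑ k ∈ s, 1 / ((k : ℝ) + 1) ^ 2) ≤ π ^ 2 / 6 := by
      have hz := hasSum_zeta_two
      have himg : (∑ k ∈ s, (1:ℝ) / ((k : ℝ) + 1) ^ 2)
          = ∑ n ∈ s.map (⟨fun n => n + 1, fun a b h => by simpa using h⟩ : ℕ ↪ ℕ), (1:ℝ) / (n : ℝ) ^ 2 := by
        rw [Finset.sum_map]
        refine Finset.sum_congr rfl fun k _ => ?_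
        show (1:ℝ) / ((k : ℝ) + 1) ^ 2 = 1 / (((k + 1 : ℕ) : ℝ)) ^ 2
        push_cast
        ring
      rw [himg]
      have hle := Summable.sum_le_tsum (s.map (⟨fun n => n + 1, fun a b h => by simpa using h⟩ : ℕ ↪ ℕ))
        (fun n _ => by positivity) hz.summable
      rwa [hz.tsum_eq] at hle
    calc (l ^ 2 / π ^ 2) * ∑ k ∈ s, 1 / ((k : ℝ) + 1) ^ 2
        ≤ (l ^ 2 / π ^ 2) * (π ^ 2 / 6) := by
          apply mul_le_mul_of_nonneg_left h2 (by positivity)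
      _ = l ^ 2 / 6 := by field_simp
  -- partial sum bound
  have hbound : ∀ s : Finset ℕ, (∑ k ∈ s, a k) ≤ l / Real.sqrt 6 * ‖G‖ := by
    intro s
    have hcs := Finset.sum_mul_sq_le_sq_mul_sq s (fun k => 1 / c k) (fun k => |D k|)
    have hsum_nonneg : 0 ≤ ∑ k ∈ s, (1 / c k) * |D k| :=
      Finset.sum_nonneg fun k _ => by positivity
    have step1 : (∑ k ∈ s, a k) = ∑ k ∈ s, (1 / c k) * |D k| :=
      Finset.sum_congr rfl fun k _ => ha k
    have step2 : (∑ k ∈ s, (1 / c k) * |D k|)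
        ≤ Real.sqrt ((∑ k ∈ s, (1 / c k) ^ 2) * (∑ k ∈ s, |D k| ^ 2)) := by
      rw [← Real.sqrt_sq hsum_nonneg]
      exact Real.sqrt_le_sqrt hcs
    have habs : (∑ k ∈ s, |D k| ^ 2) = ∑ k ∈ s, (D k) ^ 2 :=
      Finset.sum_congr rfl fun k _ => sq_abs _
    have step3 : Real.sqrt ((∑ k ∈ s, (1 / c k) ^ 2) * (∑ k ∈ s, |D k| ^ 2))
        ≤ Real.sqrt ((l ^ 2 / 6) * ‖G‖ ^ 2) := by
      apply Real.sqrt_le_sqrt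
      rw [habs]
      have hDnn : 0 ≤ ∑ k ∈ s, (D k) ^ 2 := Finset.sum_nonneg fun k _ => sq_nonneg _
      have h1 : (∑ k ∈ s, (1 / c k) ^ 2) * (∑ k ∈ s, (D k) ^ 2)
          ≤ (l ^ 2 / 6) * (∑ k ∈ s, (D k) ^ 2) :=
        mul_le_mul_of_nonneg_right (hcsum s) hDnn
      have h2 : (l ^ 2 / 6) * (∑ k ∈ s, (D k) ^ 2) ≤ (l ^ 2 / 6) * ‖G‖ ^ 2 :=
        mul_le_mul_of_nonneg_left (bessel s) (by positivity)
      linarith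
    have step4 : Real.sqrt ((l ^ 2 / 6) * ‖G‖ ^ 2) = l / Real.sqrt 6 * ‖G‖ := by
      rw [Real.sqrt_mul (by positivity), Real.sqrt_sq (norm_nonneg _),
        Real.sqrt_div' _ (by norm_num)]
      · ring_nf
        rw [Real.sqrt_sq hl.le]
    calc (∑ k ∈ s, a k) = ∑ k ∈ s, (1 / c k) * |D k| := step1
      _ ≤ Real.sqrt ((∑ k ∈ s, (1 / c k) ^ 2) * (∑ k ∈ s, |D k| ^ 2)) := step2
      _ ≤ Real.sqrt ((l ^ 2 / 6) * ‖G‖ ^ 2) := step3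
      _ = l / Real.sqrt 6 * ‖G‖ := step4
  have hsummable : Summable a := summable_of_sum_le ha_nonneg hbound
  have hnormG : ‖G‖ = Real.sqrt (∫ x in (0:ℝ)..l, (φi 4 x) ^ 2) := by
    rw [← normG_sq, Real.sqrt_sq (norm_nonneg _)]
  refine ⟨hsummable, ?_⟩
  have := Summable.tsum_le_of_sum_le hsummable hbound
  rwa [hnormG] at this

end FourierCubedAux

/-- Lemma 4.4: (a) if `f` is continuous on `[0,l]×[0,T]`, four times continuously
differentiable in `x` with `∂⁴f/∂x⁴` jointly continuous, and
`f(0,t) = f(l,t) = ∂²f/∂x²(0,t) = ∂²f/∂x²(l,t) = 0`, then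
`∑_{k=1}^∞ λ_k³ |f_k(t)| ≤ (l/√6) ‖∂⁴f/∂x⁴(·,t)‖_{L²(0,l)}` for every `t ∈ [0,T]`;
(b) if `φ` is four times continuously differentiable on `[0,l]` with
`φ(0) = φ(l) = φ''(0) = φ''(l) = 0`, then `∑_{k=1}^∞ λ_k³ |φ_k| ≤ (l/√6) ‖φ⁗‖_{L²(0,l)}`. -/
theorem fourier_coeff_cubed_sum_estimates (l T : ℝ) (hl : 0 < l) (hT : 0 < T)
    (f : ℝ → ℝ → ℝ) (φ : ℝ → ℝ) :
    ((ContinuousOn (fun p : ℝ × ℝ => f p.1 p.2) (Set.Icc 0 l ×ˢ Set.Icc 0 T) ∧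
      (∀ t ∈ Set.Icc 0 T, ContDiffOn ℝ 4 (fun x => f x t) (Set.Icc 0 l)) ∧
      ContinuousOn
        (fun p : ℝ × ℝ => iteratedDerivWithin 4 (fun x => f x p.2) (Set.Icc 0 l) p.1)
        (Set.Icc 0 l ×ˢ Set.Icc 0 T) ∧
      (∀ t ∈ Set.Icc 0 T, f 0 t = 0) ∧
      (∀ t ∈ Set.Icc 0 T, f l t = 0) ∧
      (∀ t ∈ Set.Icc 0 T, iteratedDerivWithin 2 (fun x => f x t) (Set.Icc 0 l) 0 = 0) ∧
      (∀ t ∈ Set.Icc 0 T, iteratedDerivWithin 2 (fun x => f x t) (Set.Icc 0 l) l = 0)) →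
      ∀ t ∈ Set.Icc 0 T,
        Summable (fun k : ℕ => (π * ((k : ℝ) + 1) / l) ^ 3 *
          |Real.sqrt (2 / l) *
            ∫ x in (0:ℝ)..l, f x t * Real.sin (π * ((k : ℝ) + 1) / l * x)|) ∧
        (∑' k : ℕ, (π * ((k : ℝ) + 1) / l) ^ 3 *
            |Real.sqrt (2 / l) *
              ∫ x in (0:ℝ)..l, f x t * Real.sin (π * ((k : ℝ) + 1) / l * x)|)
          ≤ l / Real.sqrt 6 *
            Real.sqrt (∫ x in (0:ℝ)..l,
              (iteratedDerivWithin 4 (fun y => f y t) (Set.Icc 0 l) x) ^ 2)) ∧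
    ((ContDiffOn ℝ 4 φ (Set.Icc 0 l) ∧ φ 0 = 0 ∧ φ l = 0 ∧
      iteratedDerivWithin 2 φ (Set.Icc 0 l) 0 = 0 ∧
      iteratedDerivWithin 2 φ (Set.Icc 0 l) l = 0) →
      Summable (fun k : ℕ => (π * ((k : ℝ) + 1) / l) ^ 3 *
        |Real.sqrt (2 / l) *
          ∫ x in (0:ℝ)..l, φ x * Real.sin (π * ((k : ℝ) + 1) / l * x)|) ∧
      (∑' k : ℕ, (π * ((k : ℝ) + 1) / l) ^ 3 *
          |Real.sqrt (2 / l) *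
            ∫ x in (0:ℝ)..l, φ x * Real.sin (π * ((k : ℝ) + 1) / l * x)|)
        ≤ l / Real.sqrt 6 *
          Real.sqrt (∫ x in (0:ℝ)..l,
            (iteratedDerivWithin 4 φ (Set.Icc 0 l) x) ^ 2)) := by
  constructor
  · rintro ⟨-, hreg, -, hb0, hbl, h20, h2T⟩ t ht
    exact FourierCubedAux.core hl (fun x => f x t) (hreg t ht) (hb0 t ht) (hbl t ht)
      (h20 t ht) (h2T t ht)
  · rintro ⟨hφ, h0, hL, h2, h2l⟩
    exact FourierCubedAux.core hl φ hφ h0 hL h2 h2l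
end
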